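/- arXiv:1207.3620 — 7 statements merged into one kernel-verified Lean document; each statement's English description precedes it below -/
import Mathlib

section
/- Let 1 < p < ∞ with conjugate exponent p'. If K is a relatively p-compact subset of a Banach space X, then K is a p-limited subset of X. -/
open NormedSpace ENNReal

noncomputable section

/-- A set `S` is `p`-limited if for every sequence `f` of functionals with
`∑ₙ |fₙ z|^p < ∞` for all `z`, there is a nonnegative `p`-summable sequence `α`
dominating `|fₙ z|` uniformly for `z ∈ S`. -/
def PLimited (p : ℝ) {X : Type*} [NormedAddCommGroup X] [NormedSpace ℝ X]
    (S : Set X) : Prop :=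
  ∀ f : ℕ → StrongDual ℝ X, (∀ z : X, Summable fun n => |f n z| ^ p) →
    ∃ α : ℕ → ℝ, (∀ n, 0 ≤ α n) ∧ (Summable fun n => α n ^ p) ∧
      ∀ z ∈ S, ∀ n, |f n z| ≤ α n

/-- Every relatively `p`-compact subset of a Banach space is `p`-limited. -/
theorem stmt_0 {X : Type*} [NormedAddCommGroup X] [NormedSpace ℝ X] [CompleteSpace X]
    (p p' : ℝ) (hp : 1 < p) (hpq : 1 / p + 1 / p' = 1)
    [Fact (1 ≤ ENNReal.ofReal p')] (K : Set X)
    (hK : ∃ x : ℕ → X, (Summable fun n => ‖x n‖ ^ p) ∧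
      K ⊆ {y | ∃ α : lp (fun _ : ℕ => ℝ) (ENNReal.ofReal p'),
        ‖α‖ ≤ 1 ∧ HasSum (fun n => α n • x n) y}) :
    PLimited p K := by
  obtain ⟨x, hx1, hsub⟩ := hK
  intro f hfs
  have hp0 : 0 < p := lt_trans one_pos hp
  have hcj : p.HolderConjugate p' := Real.holderConjugate_iff.mpr ⟨hp, by simpa [one_div] using hpq⟩
  have hp'0 : 0 < p' := hcj.symm.pos
  have hqt : (ENNReal.ofReal p).toReal = p := ENNReal.toReal_ofReal hp0.le
  have hq't : (ENNReal.ofReal p').toReal = p' := ENNReal.toReal_ofReal hp'0.le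
  have hq0 : (ENNReal.ofReal p) ≠ 0 := (ENNReal.ofReal_pos.2 hp0).ne'
  haveI : Fact (1 ≤ ENNReal.ofReal p) := ⟨ENNReal.one_le_ofReal.2 hp.le⟩
  -- membership of the "column" sequences
  have hmemz : ∀ z : X, Memℓp (fun n => f n z) (ENNReal.ofReal p) := by
    intro z
    apply memℓp_gen
    simpa [hqt, Real.norm_eq_abs] using hfs z
  -- the linear map V : X → ℓᵖ, z ↦ (fₙ z)
  set V : X →ₗ[ℝ] lp (fun _ : ℕ => ℝ) (ENNReal.ofReal p) :=
    { toFun := fun z => ⟨fun n => f n z, hmemz z⟩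
      map_add' := fun a b => by
        apply lp.ext
        rw [lp.coeFn_add]
        funext n
        exact (f n).map_add a b
      map_smul' := fun c a => by
        apply lp.ext
        rw [lp.coeFn_smul]
        funext n
        exact (f n).map_smul c a } with hV
  have hVapp : ∀ z n, (V z : ∀ _ : ℕ, ℝ) n = f n z := fun z n => rfl
  -- coordinate evaluations are Lipschitz
  have hev : ∀ n, LipschitzWith 1 (fun w : lp (fun _ : ℕ => ℝ) (ENNReal.ofReal p) => w n) := by
    intro n
    apply LipschitzWith.of_dist_le_mul
    intro w w'
    simp only [NNReal.coe_one, one_mul, dist_eq_norm]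
    have h := lp.norm_apply_le_norm hq0 (w - w') n
    simpa [lp.coeFn_sub] using h
  -- closed graph theorem
  have hVcont : Continuous V := by
    apply V.continuous_of_seq_closed_graph
    intro u a y hua huy
    apply lp.ext
    funext n
    have h1 : Filter.Tendsto (fun k => (V (u k) : ∀ _ : ℕ, ℝ) n) Filter.atTop (nhds (y n)) :=
      ((hev n).continuous.tendsto y).comp huy
    have h2 : Filter.Tendsto (fun k => f n (u k)) Filter.atTop (nhds (f n a)) :=
      ((f n).continuous.tendsto a).comp hua
    exact tendsto_nhds_unique h1 h2
  set Vc : X →L[ℝ] lp (fun _ : ℕ => ℝ) (ENNReal.ofReal p) := ⟨V, hVcont⟩ with hVc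
  set M : ℝ := ‖Vc‖ with hM
  have hM0 : 0 ≤ M := norm_nonneg _
  -- the "row" sequences wₙ = (fₙ (x k))ₖ are in ℓᵖ
  have hmemw : ∀ n, Memℓp (fun k => f n (x k)) (ENNReal.ofReal p) := by
    intro n
    apply memℓp_gen
    rw [hqt]
    apply Summable.of_nonneg_of_le (fun k => by positivity)
      (fun k => ?_) (hx1.mul_left (‖f n‖ ^ p))
    rw [← Real.mul_rpow (norm_nonneg _) (norm_nonneg _)]
    exact Real.rpow_le_rpow (norm_nonneg _) ((f n).le_opNorm (x k)) hp0.le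
  set w : ℕ → lp (fun _ : ℕ => ℝ) (ENNReal.ofReal p) := fun n => ⟨fun k => f n (x k), hmemw n⟩
    with hw
  set A : ℕ → ℝ := fun n => ‖w n‖ with hA
  have hA0 : ∀ n, 0 ≤ A n := fun n => norm_nonneg _
  have hAp : ∀ n, A n ^ p = ∑' k, |f n (x k)| ^ p := by
    intro n
    have := lp.norm_rpow_eq_tsum (by rw [hqt]; exact hp0) (w n)
    rw [hqt] at this
    simpa [Real.norm_eq_abs] using this
  -- summability of ∑ₙ Aₙ^p via Fubini and boundedness of V
  have hgsum : Summable fun q : ℕ × ℕ => |f q.2 (x q.1)| ^ p := by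
    apply (summable_prod_of_nonneg (fun q => by positivity)).2
    refine ⟨fun k => hfs (x k), ?_⟩
    apply Summable.of_nonneg_of_le (fun k => tsum_nonneg fun n => by positivity)
      (fun k => ?_) ((hx1.mul_left (M ^ p)))
    have h1 : ∑' n, |f n (x k)| ^ p = ‖Vc (x k)‖ ^ p := by
      have := lp.norm_rpow_eq_tsum (by rw [hqt]; exact hp0) (Vc (x k))
      rw [hqt] at this
      rw [this]
      apply tsum_congr
      intro n
      rw [Real.norm_eq_abs]
      rfl
    rw [h1, ← Real.mul_rpow hM0 (norm_nonneg _)]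
    exact Real.rpow_le_rpow (norm_nonneg _) (Vc.le_opNorm (x k)) hp0.le
  have hAsum : Summable fun n => A n ^ p := by
    have h2 := hgsum.prod_symm
    have h3 := ((summable_prod_of_nonneg
      (f := fun q : ℕ × ℕ => |f q.1 (x q.2)| ^ p) (fun q => by positivity)).1 h2).2
    exact h3.congr fun n => (hAp n).symm
  refine ⟨A, hA0, hAsum, ?_⟩
  -- domination on K
  intro z hz n
  obtain ⟨a, ha1, ha2⟩ := hsub hz
  have hconj : ((ENNReal.ofReal p').toReal).HolderConjugate ((ENNReal.ofReal p).toReal) := by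
    rw [hqt, hq't]; exact hcj.symm
  have hmul := lp.tsum_mul_le_mul_norm hconj a (w n)
  have hsum2 : HasSum (fun k => a k * f n (x k)) (f n z) := by
    have := ha2.mapL (f n)
    simpa [smul_eq_mul] using this
  have habs : ∀ k, |a k * f n (x k)| = ‖a k‖ * ‖(w n : ∀ _ : ℕ, ℝ) k‖ := by
    intro k
    rw [abs_mul, Real.norm_eq_abs, Real.norm_eq_abs]
  have hs : Summable fun k => ‖a k * f n (x k)‖ :=
    hmul.1.congr fun k => ((Real.norm_eq_abs _).trans (habs k)).symm
  have h5 := norm_tsum_le_tsum_norm hs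
  calc |f n z| = ‖∑' k, a k * f n (x k)‖ := by rw [hsum2.tsum_eq, Real.norm_eq_abs]
    _ ≤ ∑' k, ‖a k * f n (x k)‖ := h5
    _ = ∑' k, ‖a k‖ * ‖(w n : ∀ _ : ℕ, ℝ) k‖ :=
        tsum_congr fun k => (Real.norm_eq_abs _).trans (habs k)
    _ ≤ ‖a‖ * ‖w n‖ := hmul.2
    _ ≤ 1 * ‖w n‖ := mul_le_mul_of_nonneg_right ha1 (norm_nonneg _)
    _ = A n := one_mul _
end
end

section
/- Let 1 < p < ∞ with conjugate exponent p' and let x = ⟨x_n⟩ be a weakly p-summable sequence in a Banach space X. Then the following are equivalent: (i) for every bounded linear operator T : X → ℓ_p, one has ∑_n ‖T x_n‖_{ℓ_p}^p < ∞; (ii) the adjoint E_x* : X* → (ℓ_{p'})* of the operator E_x : ℓ_{p'} → X is absolutely p-summing. -/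
open NormedSpace ENNReal

noncomputable section

/-- A sequence `x` in a normed space is weakly `p`-summable if
`∑ₙ |f (x n)|^p < ∞` for every continuous functional `f`. -/
def WeaklySummable (p : ℝ) {X : Type*} [NormedAddCommGroup X] [NormedSpace ℝ X]
    (x : ℕ → X) : Prop :=
  ∀ f : StrongDual ℝ X, Summable fun n => |f (x n)| ^ p

/-- A bounded operator `T` is absolutely `p`-summing if it maps weakly `p`-summable
sequences to norm `p`-summable sequences. -/
def AbsolutelySumming (p : ℝ) {X Y : Type*} [NormedAddCommGroup X] [NormedSpace ℝ X]
    [NormedAddCommGroup Y] [NormedSpace ℝ Y] (T : X →L[ℝ] Y) : Prop :=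
  ∀ x : ℕ → X, WeaklySummable p x → Summable fun n => ‖T (x n)‖ ^ p

/-- The adjoint (dual map) of a bounded operator: `dualMap T g = g ∘ T`. -/
def dualMap {X Y : Type*} [NormedAddCommGroup X] [NormedSpace ℝ X]
    [NormedAddCommGroup Y] [NormedSpace ℝ Y] (T : X →L[ℝ] Y) :
    StrongDual ℝ Y →L[ℝ] StrongDual ℝ X :=
  (ContinuousLinearMap.compL ℝ X Y ℝ).flip T

namespace Stmt5Aux

lemma c_spec (p : ℝ) (hp : 1 < p) (a : ℝ) :
    (Real.sign a * |a| ^ (p - 1)) * a = |a| ^ p := by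
  rcases eq_or_ne a 0 with h | h
  · simp [h, Real.sign_zero, Real.zero_rpow (by linarith : p ≠ 0)]
  · have h1 : |a| ^ p = |a| ^ (p - 1) * |a| := by
      rw [← Real.rpow_add_one (abs_ne_zero.mpr h) (p - 1), sub_add_cancel]
    rcases h.lt_or_gt with hn | hp2
    · rw [Real.sign_of_neg hn, h1, abs_of_neg hn]; ring
    · rw [Real.sign_of_pos hp2, h1, abs_of_pos hp2]; ring

lemma c_abs (p : ℝ) (hp : 1 < p) (a : ℝ) :
    |Real.sign a * |a| ^ (p - 1)| = |a| ^ (p - 1) := by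
  rcases eq_or_ne a 0 with h | h
  · simp [h, Real.zero_rpow (by linarith : p - 1 ≠ 0)]
  · rw [abs_mul, abs_of_nonneg (Real.rpow_nonneg (abs_nonneg a) _)]
    rcases h.lt_or_gt with hn | hp2
    · rw [Real.sign_of_neg hn]; simp
    · rw [Real.sign_of_pos hp2]; simp

lemma rpow_trick {p p' : ℝ} (hpq : Real.HolderConjugate p p') {C t : ℝ} (hC : 0 ≤ C) (ht : 0 ≤ t)
    (h : t ≤ C * t ^ (1 / p')) : t ≤ C ^ p := by
  rcases ht.eq_or_lt with h0 | h0
  · rw [← h0]; exact Real.rpow_nonneg hC p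
  · have hsum : 1 / p + 1 / p' = 1 := by
      simpa [one_div] using hpq.inv_add_inv_eq_one
    have hsplit : t = t ^ (1 / p) * t ^ (1 / p') := by
      rw [← Real.rpow_add h0, hsum, Real.rpow_one]
    have hpos : 0 < t ^ (1 / p') := Real.rpow_pos_of_pos h0 _
    have h2 : t ^ (1 / p) ≤ C := by
      refine le_of_mul_le_mul_right ?_ hpos
      rw [← hsplit]; exact h
    calc t = (t ^ (1 / p)) ^ p := by
          rw [← Real.rpow_mul ht, one_div, inv_mul_cancel₀ hpq.ne_zero, Real.rpow_one]
      _ ≤ C ^ p := Real.rpow_le_rpow (Real.rpow_nonneg ht _) h2 hpq.nonneg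

lemma sum_bound {p p' : ℝ} (hpq : Real.HolderConjugate p p') {a : ℕ → ℝ} {C : ℝ} (hC : 0 ≤ C)
    (key : ∀ s : Finset ℕ, ∑ k ∈ s, |a k| ^ p ≤ C * (∑ k ∈ s, |a k| ^ p) ^ (1 / p')) :
    Summable (fun k => |a k| ^ p) ∧ ∑' k, |a k| ^ p ≤ C ^ p := by
  have hnn : ∀ k, 0 ≤ |a k| ^ p := fun k => Real.rpow_nonneg (abs_nonneg _) _
  have hb : ∀ s : Finset ℕ, ∑ k ∈ s, |a k| ^ p ≤ C ^ p := fun s =>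
    rpow_trick hpq hC (Finset.sum_nonneg fun k _ => hnn k) (key s)
  have hs : Summable fun k => |a k| ^ p := summable_of_sum_le hnn hb
  exact ⟨hs, hs.tsum_le_of_sum_le hb⟩

lemma holder_step {p p' : ℝ} (hpq : Real.HolderConjugate p p') (s : Finset ℕ) (u v : ℕ → ℝ) :
    |∑ k ∈ s, u k * v k| ≤
      (∑ k ∈ s, |u k| ^ p') ^ (1 / p') * (∑ k ∈ s, |v k| ^ p) ^ (1 / p) := by
  calc |∑ k ∈ s, u k * v k| ≤ ∑ k ∈ s, |u k * v k| := Finset.abs_sum_le_sum_abs _ _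
    _ = ∑ k ∈ s, |u k| * |v k| := by simp [abs_mul]
    _ ≤ (∑ k ∈ s, |u k| ^ p') ^ (1 / p') * (∑ k ∈ s, |v k| ^ p) ^ (1 / p) := by
        simpa [abs_abs] using
          Real.inner_le_Lp_mul_Lq s (fun k => |u k|) (fun k => |v k|) hpq.symm

lemma key_summable {Z : Type*} [NormedAddCommGroup Z] [NormedSpace ℝ Z]
    {p p' : ℝ} (hpq : Real.HolderConjugate p p')
    (β : Z →L[ℝ] ℝ) (w : ℕ → Z)
    (hw : ∀ (c : ℕ → ℝ) (s : Finset ℕ),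
      ‖∑ k ∈ s, c k • w k‖ ≤ (∑ k ∈ s, |c k| ^ p') ^ (1 / p')) :
    Summable (fun k => |β (w k)| ^ p) ∧ ∑' k, |β (w k)| ^ p ≤ ‖β‖ ^ p := by
  set a : ℕ → ℝ := fun k => β (w k) with ha
  refine sum_bound hpq (norm_nonneg β) fun s => ?_
  set c : ℕ → ℝ := fun k => Real.sign (a k) * |a k| ^ (p - 1) with hc
  have habs : ∀ k, |c k| ^ p' = |a k| ^ p := fun k => by
    rw [hc, c_abs p hpq.lt, ← Real.rpow_mul (abs_nonneg _), hpq.sub_one_mul_conj]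
  have heval : β (∑ k ∈ s, c k • w k) = ∑ k ∈ s, |a k| ^ p := by
    rw [map_sum]
    exact Finset.sum_congr rfl fun k _ => by rw [map_smul, smul_eq_mul, c_spec p hpq.lt]
  calc ∑ k ∈ s, |a k| ^ p = β (∑ k ∈ s, c k • w k) := heval.symm
    _ ≤ ‖β‖ * ‖∑ k ∈ s, c k • w k‖ := by
        refine (le_abs_self _).trans ?_
        simpa [Real.norm_eq_abs] using β.le_opNorm (∑ k ∈ s, c k • w k)
    _ ≤ ‖β‖ * (∑ k ∈ s, |c k| ^ p') ^ (1 / p') :=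
        mul_le_mul_of_nonneg_left (hw c s) (norm_nonneg β)
    _ = ‖β‖ * (∑ k ∈ s, |a k| ^ p) ^ (1 / p') := by
        congr 1
        exact congrArg (fun t => t ^ (1 / p')) (Finset.sum_congr rfl fun k _ => habs k)



/-- coordinate evaluation functional on `lp` -/
def coordL (q : ℝ≥0∞) [Fact (1 ≤ q)] (hq : q ≠ 0) (n : ℕ) : lp (fun _ : ℕ => ℝ) q →L[ℝ] ℝ :=
  LinearMap.mkContinuous
    { toFun := fun y => y n
      map_add' := fun y z => by simp [lp.coeFn_add]
      map_smul' := fun c y => by simp [lp.coeFn_smul] }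
    1 (fun y => by rw [one_mul]; exact lp.norm_apply_le_norm hq y n)

@[simp] lemma coordL_apply (q : ℝ≥0∞) [Fact (1 ≤ q)] (hq : q ≠ 0) (n : ℕ) (y : lp (fun _ : ℕ => ℝ) q) :
    coordL q hq n y = y n := rfl

/-- norm of a finitely supported combination of coordinate functionals on `ℓ_p` is at most
the `ℓ_{p'}` norm of the coefficients -/
lemma coord_sum_norm {p p' : ℝ} (hpq : Real.HolderConjugate p p')
    [Fact (1 ≤ ENNReal.ofReal p)] (hq : ENNReal.ofReal p ≠ 0) (hPt : (ENNReal.ofReal p).toReal = p)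
    (c : ℕ → ℝ) (s : Finset ℕ) :
    ‖∑ n ∈ s, c n • coordL (ENNReal.ofReal p) hq n‖ ≤ (∑ n ∈ s, |c n| ^ p') ^ (1 / p') := by
  refine ContinuousLinearMap.opNorm_le_bound _
    (Real.rpow_nonneg (Finset.sum_nonneg fun k _ => Real.rpow_nonneg (abs_nonneg _) _) _)
    fun y => ?_
  have h1 : (∑ n ∈ s, c n • coordL (ENNReal.ofReal p) hq n) y = ∑ n ∈ s, c n * y n := by
    simp [ContinuousLinearMap.sum_apply]
  rw [h1, Real.norm_eq_abs]
  refine (holder_step hpq s c (fun n => y n)).trans ?_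
  refine mul_le_mul_of_nonneg_left ?_
    (Real.rpow_nonneg (Finset.sum_nonneg fun k _ => Real.rpow_nonneg (abs_nonneg _) _) _)
  have h2 : ∑ n ∈ s, |y n| ^ p ≤ ‖y‖ ^ p := by
    have := lp.sum_rpow_le_norm_rpow (p := ENNReal.ofReal p)
      (by rw [hPt]; exact hpq.pos) y s
    rw [hPt] at this
    simpa [Real.norm_eq_abs] using this
  calc (∑ n ∈ s, |y n| ^ p) ^ (1 / p) ≤ (‖y‖ ^ p) ^ (1 / p) :=
        Real.rpow_le_rpow (Finset.sum_nonneg fun k _ => Real.rpow_nonneg (abs_nonneg _) _)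
          h2 hpq.one_div_nonneg
    _ = ‖y‖ := by rw [one_div, Real.rpow_rpow_inv (norm_nonneg _) hpq.ne_zero]

/-- norm of a finitely supported element of `ℓ_{p'}` -/
lemma single_sum_norm {p' : ℝ} (hp' : 0 < p') [Fact (1 ≤ ENNReal.ofReal p')] (hP't : (ENNReal.ofReal p').toReal = p')
    (c : ℕ → ℝ) (s : Finset ℕ) :
    ‖∑ k ∈ s, c k • lp.single (E := fun _ : ℕ => ℝ) (ENNReal.ofReal p') k (1 : ℝ)‖ =
      (∑ k ∈ s, |c k| ^ p') ^ (1 / p') := by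
  have hsingle : ∀ k, c k • lp.single (E := fun _ : ℕ => ℝ) (ENNReal.ofReal p') k (1 : ℝ) =
      lp.single (ENNReal.ofReal p') k (c k) := by
    intro k
    rw [← lp.single_smul]
    norm_num
  simp_rw [hsingle]
  have := lp.norm_sum_single (p := ENNReal.ofReal p') (by rw [hP't]; exact hp') c s
  rw [hP't] at this
  simp only [Real.norm_eq_abs] at this
  have hsnn : (0:ℝ) ≤ ∑ k ∈ s, |c k| ^ p' :=
    Finset.sum_nonneg fun k _ => Real.rpow_nonneg (abs_nonneg _) _
  have hmem : (0:ℝ) ≤ ‖∑ k ∈ s, lp.single (E := fun _ : ℕ => ℝ) (ENNReal.ofReal p') k (c k)‖ :=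
    norm_nonneg _
  refine Real.rpow_left_injOn hp'.ne' hmem (Real.rpow_nonneg hsnn _) ?_
  dsimp only
  rw [this, one_div, Real.rpow_inv_rpow hsnn hp'.ne']


lemma opnorm_upper {p p' : ℝ} (hpq : Real.HolderConjugate p p')
    [Fact (1 ≤ ENNReal.ofReal p')] (hP't : (ENNReal.ofReal p').toReal = p')
    {X : Type*} [NormedAddCommGroup X] [NormedSpace ℝ X]
    (x : ℕ → X) (f : X →L[ℝ] ℝ) (hfx : Summable fun k => |f (x k)| ^ p)
    (E : lp (fun _ : ℕ => ℝ) (ENNReal.ofReal p') →L[ℝ] X)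
    (hE : ∀ α : lp (fun _ : ℕ => ℝ) (ENNReal.ofReal p'),
      HasSum (fun n => α n • x n) (E α)) :
    ‖f.comp E‖ ≤ (∑' k, |f (x k)| ^ p) ^ (1 / p) := by
  have hMnn : (0:ℝ) ≤ (∑' k, |f (x k)| ^ p) ^ (1 / p) :=
    Real.rpow_nonneg (tsum_nonneg fun k => Real.rpow_nonneg (abs_nonneg _) _) _
  refine ContinuousLinearMap.opNorm_le_bound _ hMnn fun α => ?_
  have hsum : HasSum (fun k => α k * f (x k)) (f (E α)) := by
    have := (hE α).mapL f
    simpa [smul_eq_mul] using this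
  have hbound : ∀ s : Finset ℕ, |∑ k ∈ s, α k * f (x k)| ≤
      (∑' k, |f (x k)| ^ p) ^ (1 / p) * ‖α‖ := by
    intro s
    refine (holder_step hpq s (fun k => α k) (fun k => f (x k))).trans ?_
    rw [mul_comm ((∑' k, |f (x k)| ^ p) ^ (1 / p)) ‖α‖]
    have h1 : (∑ k ∈ s, |α k| ^ p') ^ (1 / p') ≤ ‖α‖ := by
      have h1a := lp.sum_rpow_le_norm_rpow (p := ENNReal.ofReal p')
        (by rw [hP't]; exact hpq.symm.pos) α s
      rw [hP't] at h1a
      simp only [Real.norm_eq_abs] at h1a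
      calc (∑ k ∈ s, |α k| ^ p') ^ (1 / p') ≤ (‖α‖ ^ p') ^ (1 / p') :=
            Real.rpow_le_rpow
              (Finset.sum_nonneg fun k _ => Real.rpow_nonneg (abs_nonneg _) _) h1a
              hpq.symm.one_div_nonneg
        _ = ‖α‖ := by rw [one_div, Real.rpow_rpow_inv (norm_nonneg _) hpq.symm.ne_zero]
    have h2 : (∑ k ∈ s, |f (x k)| ^ p) ^ (1 / p) ≤ (∑' k, |f (x k)| ^ p) ^ (1 / p) :=
      Real.rpow_le_rpow
        (Finset.sum_nonneg fun k _ => Real.rpow_nonneg (abs_nonneg _) _)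
        (hfx.sum_le_tsum s (fun k _ => Real.rpow_nonneg (abs_nonneg _) _))
        hpq.one_div_nonneg
    exact mul_le_mul h1 h2
      (Real.rpow_nonneg (Finset.sum_nonneg fun k _ => Real.rpow_nonneg (abs_nonneg _) _) _)
      (norm_nonneg _)
  have htend : Filter.Tendsto (fun s : Finset ℕ => |∑ k ∈ s, α k * f (x k)|)
      Filter.atTop (nhds |f (E α)|) := (continuous_abs.tendsto _).comp hsum
  have := le_of_tendsto htend (Filter.Eventually.of_forall hbound)
  simpa [Real.norm_eq_abs] using this

end Stmt5Aux

open Stmt5Aux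

/-- For a weakly `p`-summable sequence `x` in `X` with associated operator
`E : ℓ_{p'} → X`, `⟨T xₙ⟩` is norm `p`-summable for every `T : X → ℓ_p` iff the
adjoint `E* : X* → (ℓ_{p'})*` is absolutely `p`-summing. -/
theorem stmt_5 {X : Type*} [NormedAddCommGroup X] [NormedSpace ℝ X] [CompleteSpace X]
    (p p' : ℝ) (hp : 1 < p) (hpq : 1 / p + 1 / p' = 1)
    [Fact (1 ≤ ENNReal.ofReal p)] [Fact (1 ≤ ENNReal.ofReal p')]
    (x : ℕ → X) (hx : WeaklySummable p x)
    (E : lp (fun _ : ℕ => ℝ) (ENNReal.ofReal p') →L[ℝ] X)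
    (hE : ∀ α : lp (fun _ : ℕ => ℝ) (ENNReal.ofReal p'),
      HasSum (fun n => α n • x n) (E α)) :
    (∀ T : X →L[ℝ] lp (fun _ : ℕ => ℝ) (ENNReal.ofReal p),
        Summable fun n => ‖T (x n)‖ ^ p) ↔
      AbsolutelySumming p (dualMap E) := by
  classical
  have hp0 : 0 < p := lt_trans zero_lt_one hp
  have hpq' : Real.HolderConjugate p p' := Real.holderConjugate_iff.mpr ⟨hp, by rw [← one_div, ← one_div]; exact hpq⟩
  have hp'0 : 0 < p' := hpq'.symm.pos
  have hPt : (ENNReal.ofReal p).toReal = p := ENNReal.toReal_ofReal hp0.le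
  have hP't : (ENNReal.ofReal p').toReal = p' := ENNReal.toReal_ofReal hp'0.le
  have hP0 : ENNReal.ofReal p ≠ 0 := by
    simp only [ne_eq, ENNReal.ofReal_eq_zero, not_le]; exact hp0
  set e : ℕ → lp (fun _ : ℕ => ℝ) (ENNReal.ofReal p') :=
    fun k => lp.single (ENNReal.ofReal p') k (1 : ℝ) with he
  have hEe : ∀ k, E (e k) = x k := by
    intro k
    have h1 : (fun n => (e k) n • x n) = fun n => if n = k then x k else 0 := by
      funext n
      by_cases h : n = k
      · subst h; simp [he, lp.single_apply_self]
      · simp [he, lp.single_apply_ne _ _ _ h, h]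
    have h2 : HasSum (fun n => (e k) n • x n) (x k) := by
      rw [h1]; exact hasSum_ite_eq k (x k)
    exact (hE (e k)).unique h2
  have hwD : ∀ (c : ℕ → ℝ) (s : Finset ℕ),
      ‖∑ k ∈ s, c k • e k‖ ≤ (∑ k ∈ s, |c k| ^ p') ^ (1 / p') :=
    fun c s => le_of_eq (single_sum_norm hp'0 hP't c s)
  constructor
  · -- (i) → (ii)
    intro hT
    show ∀ f : ℕ → StrongDual ℝ X, WeaklySummable p f →
      Summable fun n => ‖(dualMap E) (f n)‖ ^ p
    intro f hf
    have hmem : ∀ z : X, Memℓp (fun n => f n z) (ENNReal.ofReal p) := by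
      intro z
      apply memℓp_gen
      rw [hPt]
      simpa [Real.norm_eq_abs, dual_def] using hf (inclusionInDoubleDual ℝ X z)
    set F : X →ₗ[ℝ] lp (fun _ : ℕ => ℝ) (ENNReal.ofReal p) :=
      { toFun := fun z => ⟨fun n => f n z, hmem z⟩
        map_add' := fun z w => by
          apply lp.ext
          funext n
          simp [lp.coeFn_add, map_add]
          rfl
        map_smul' := fun c z => by
          apply lp.ext
          funext n
          simp [lp.coeFn_smul, map_smul] } with hFdef
    have hcont : Continuous F := by
      apply F.continuous_of_seq_closed_graph
      intro u z y hu hy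
      apply lp.ext
      funext n
      have h1 : Filter.Tendsto (fun j => (F (u j) : ∀ _ : ℕ, ℝ) n)
          Filter.atTop (nhds (y n)) := by
        have := ((coordL (ENNReal.ofReal p) hP0 n).continuous.tendsto y).comp hy
        exact this
      have h3 : Filter.Tendsto (fun j => f n (u j)) Filter.atTop (nhds (f n z)) :=
        ((f n).continuous.tendsto z).comp hu
      have h2 : (fun j => (F (u j) : ∀ _ : ℕ, ℝ) n) = fun j => f n (u j) := rfl
      rw [h2] at h1
      exact tendsto_nhds_unique h1 h3
    set T : X →L[ℝ] lp (fun _ : ℕ => ℝ) (ENNReal.ofReal p) := ⟨F, hcont⟩ with hTdef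
    have hTs := hT T
    have hnorm : ∀ k, ‖T (x k)‖ ^ p = ∑' n, |f n (x k)| ^ p := by
      intro k
      have h := lp.norm_rpow_eq_tsum (p := ENNReal.ofReal p)
        (by rw [hPt]; exact hp0) (T (x k))
      rw [hPt] at h
      simp only [Real.norm_eq_abs] at h
      exact h
    set A : ℕ × ℕ → ℝ := fun q => |f q.2 (x q.1)| ^ p with hA
    have hAnn : ∀ q, 0 ≤ A q := fun q => Real.rpow_nonneg (abs_nonneg _) _
    have hAk : ∀ k, Summable fun n => A (k, n) := fun k => by
      simpa [hA, dual_def] using hf (inclusionInDoubleDual ℝ X (x k))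
    have hAsum : Summable fun k => ∑' n, A (k, n) := by
      have heq : (fun k => ∑' n, A (k, n)) = fun k => ‖T (x k)‖ ^ p :=
        funext fun k => (hnorm k).symm
      rw [heq]; exact hTs
    have hprod : Summable A := (summable_prod_of_nonneg hAnn).mpr ⟨hAk, hAsum⟩
    have hswap : Summable (A ∘ (Equiv.prodComm ℕ ℕ)) :=
      (Equiv.prodComm ℕ ℕ).summable_iff.mpr hprod
    have hfinal0 : Summable fun n => ∑' k, A (k, n) :=
      ((summable_prod_of_nonneg (f := A ∘ (Equiv.prodComm ℕ ℕ))
        (fun q => hAnn _)).mp hswap).2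
    refine Summable.of_nonneg_of_le
      (fun n => Real.rpow_nonneg (norm_nonneg _) _) (fun n => ?_) hfinal0
    have hle := opnorm_upper hpq' hP't x (f n) (hx (f n)) E hE
    calc ‖dualMap E (f n)‖ ^ p ≤ ((∑' k, |f n (x k)| ^ p) ^ (1 / p)) ^ p :=
          Real.rpow_le_rpow (norm_nonneg _) hle hp0.le
      _ = ∑' k, A (k, n) := by
          rw [one_div, Real.rpow_inv_rpow
            (tsum_nonneg fun k => Real.rpow_nonneg (abs_nonneg _) _) hp0.ne']
  · -- (ii) → (i)
    intro hAbs T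
    set f : ℕ → StrongDual ℝ X := fun n => (coordL (ENNReal.ofReal p) hP0 n).comp T with hfdef
    have hweak : WeaklySummable p f := fun G =>
      (key_summable hpq' (G.comp (dualMap T)) (fun n => coordL (ENNReal.ofReal p) hP0 n)
        (fun c s => coord_sum_norm hpq' hP0 hPt c s)).1
    have hAs := hAbs f hweak
    have hge : ∀ n, Summable (fun k => |f n (x k)| ^ p) ∧
        ∑' k, |f n (x k)| ^ p ≤ ‖dualMap E (f n)‖ ^ p := by
      intro n
      have hkey := key_summable hpq' (dualMap E (f n)) e hwD
      have heq : (fun k => |(dualMap E (f n)) (e k)| ^ p) = fun k => |f n (x k)| ^ p := by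
        funext k
        have h5 : (dualMap E (f n)) (e k) = f n (x k) := by
          show (f n) (E (e k)) = f n (x k)
          rw [hEe k]
        rw [h5]
      rw [heq] at hkey
      exact hkey
    set B : ℕ × ℕ → ℝ := fun q => |f q.1 (x q.2)| ^ p with hB
    have hBnn : ∀ q, 0 ≤ B q := fun q => Real.rpow_nonneg (abs_nonneg _) _
    have hBn : ∀ n, Summable fun k => B (n, k) := fun n => hx (f n)
    have hBsum : Summable fun n => ∑' k, B (n, k) :=
      Summable.of_nonneg_of_le (fun n => tsum_nonneg fun k => hBnn _)
        (fun n => (hge n).2) hAs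
    have hprod : Summable B := (summable_prod_of_nonneg hBnn).mpr ⟨hBn, hBsum⟩
    have hswap : Summable (B ∘ (Equiv.prodComm ℕ ℕ)) :=
      (Equiv.prodComm ℕ ℕ).summable_iff.mpr hprod
    have hfin : Summable fun k => ∑' n, B (n, k) :=
      ((summable_prod_of_nonneg (f := B ∘ (Equiv.prodComm ℕ ℕ))
        (fun q => hBnn _)).mp hswap).2
    have hnorm : ∀ k, ‖T (x k)‖ ^ p = ∑' n, B (n, k) := by
      intro k
      have h := lp.norm_rpow_eq_tsum (p := ENNReal.ofReal p)
        (by rw [hPt]; exact hp0) (T (x k))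
      rw [hPt] at h
      simp only [Real.norm_eq_abs] at h
      exact h
    have heq2 : (fun k => ‖T (x k)‖ ^ p) = fun k => ∑' n, B (n, k) := funext hnorm
    rw [heq2]
    exact hfin
end
end

section
/- Let 1 < p < ∞ and 1 < r < ∞. Then ℓ_p does not have the r-Dunford–Pettis property; that is, there exist a weakly r-summable sequence ⟨x_n⟩ in ℓ_p and a weakly r-summable sequence ⟨f_n⟩ in the dual (ℓ_p)* such that ∑_n ∑_k |f_k(x_n)|^r = ∞. -/
open NormedSpace ENNReal

noncomputable section

lemma sign_mul_self' (c : ℝ) : Real.sign c * c = |c| := by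
  rcases lt_trichotomy c 0 with h | h | h
  · rw [Real.sign_of_neg h, abs_of_neg h]; ring
  · simp [h]
  · rw [Real.sign_of_pos h, abs_of_pos h]; ring

lemma keyA {Z : Type*} [NormedAddCommGroup Z] [NormedSpace ℝ Z]
    {s t : ℝ} (hst : s.HolderConjugate t) (v : ℕ → Z)
    (hv : ∀ (u : ℕ → ℝ) (A : Finset ℕ),
      ‖∑ k ∈ A, u k • v k‖ ≤ (∑ k ∈ A, |u k| ^ s) ^ (1 / s))
    (F : StrongDual ℝ Z) : Summable fun n => |F (v n)| ^ t := by
  have ht : t.HolderConjugate s := hst.symm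
  have ht0 : (0:ℝ) < t := ht.pos
  have hs0 : (0:ℝ) < s := hst.pos
  set c : ℕ → ℝ := fun n => F (v n) with hc
  set u : ℕ → ℝ := fun n => Real.sign (c n) * |c n| ^ (t - 1) with hu
  have hts : (t - 1) * s = t := ht.sub_one_mul_conj
  have h1 : ∀ n, u n * c n = |c n| ^ t := by
    intro n
    by_cases h : c n = 0
    · simp [hu, h, Real.zero_rpow (ne_of_gt ht0)]
    · have habs : (0:ℝ) < |c n| := abs_pos.2 h
      calc u n * c n = |c n| ^ (t - 1) * (Real.sign (c n) * c n) := by rw [hu]; ring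
        _ = |c n| ^ (t - 1) * |c n| ^ (1:ℝ) := by rw [sign_mul_self', Real.rpow_one]
        _ = |c n| ^ t := by rw [← Real.rpow_add habs]; ring_nf
  have h2 : ∀ n, |u n| ^ s = |c n| ^ t := by
    intro n
    by_cases h : c n = 0
    · simp [hu, h, Real.zero_rpow (ne_of_gt ht0), Real.zero_rpow (ne_of_gt hs0)]
    · have habs : (0:ℝ) ≤ |c n| := abs_nonneg _
      have hsign : |Real.sign (c n)| = 1 := by
        rcases lt_trichotomy (c n) 0 with h' | h' | h'
        · rw [Real.sign_of_neg h']; norm_num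
        · exact absurd h' h
        · rw [Real.sign_of_pos h']; norm_num
      rw [hu, abs_mul, hsign, one_mul, abs_of_nonneg (Real.rpow_nonneg habs _),
        ← Real.rpow_mul habs, hts]
  -- partial sums bounded
  apply summable_of_sum_le (c := ‖F‖ ^ t) (fun n => Real.rpow_nonneg (abs_nonneg _) t)
  intro A
  set S : ℝ := ∑ n ∈ A, |c n| ^ t with hS
  have hSnn : 0 ≤ S := Finset.sum_nonneg fun n _ => Real.rpow_nonneg (abs_nonneg _) t
  have key : S ≤ ‖F‖ * S ^ (1 / s) := by
    have hFx : F (∑ n ∈ A, u n • v n) = S := by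
      rw [map_sum]
      simp only [map_smul, smul_eq_mul]
      exact Finset.sum_congr rfl fun n _ => h1 n
    calc S = F (∑ n ∈ A, u n • v n) := hFx.symm
      _ ≤ ‖F‖ * ‖∑ n ∈ A, u n • v n‖ := by
          refine le_trans (le_abs_self _) ?_
          rw [← Real.norm_eq_abs]; exact F.le_opNorm _
      _ ≤ ‖F‖ * (∑ n ∈ A, |u n| ^ s) ^ (1 / s) := by
          exact mul_le_mul_of_nonneg_left (hv u A) (norm_nonneg F)
      _ = ‖F‖ * S ^ (1 / s) := by
          congr 2
          exact Finset.sum_congr rfl fun n _ => h2 n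
  rcases eq_or_lt_of_le hSnn with h0 | h0
  · rw [← h0]; exact Real.rpow_nonneg (norm_nonneg F) t
  · have hSpow : (0:ℝ) < S ^ (1 / s) := Real.rpow_pos_of_pos h0 _
    have h3 : S ^ (1 / t) * S ^ (1 / s) = S := by
      rw [← Real.rpow_add h0]
      rw [one_div, one_div, ht.inv_add_inv_eq_one, Real.rpow_one]
    have h4 : S ^ (1 / t) ≤ ‖F‖ := by
      rw [← mul_le_mul_iff_of_pos_right hSpow, h3]; exact key
    have h5 : S = (S ^ (1 / t)) ^ t := by
      rw [← Real.rpow_mul hSnn, one_div, inv_mul_cancel₀ (ne_of_gt ht0), Real.rpow_one]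
    rw [h5]
    exact Real.rpow_le_rpow (Real.rpow_nonneg hSnn _) h4 (le_of_lt ht0)


lemma psum {γ : ℝ} (hγ : 1 < γ) : Summable fun n : ℕ => ((n : ℝ) + 1) ^ (-γ) := by
  have h := Real.summable_nat_rpow (p := -γ) |>.2 (by linarith)
  have := (summable_nat_add_iff 1).2 h
  convert this using 2 with n
  all_goals push_cast
  all_goals rfl

lemma keyB {c : ℕ → ℝ} {q r α : ℝ} (hq : 1 < q) (hr : 1 < r)
    (hα : 0 < α) (hα2 : 1 / r - 1 / q < α)
    (hc : Summable fun n => |c n| ^ q) :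
    Summable fun n : ℕ => |((n : ℝ) + 1) ^ (-α) * c n| ^ r := by
  have hr0 : (0:ℝ) < r := by linarith
  have hq0 : (0:ℝ) < q := by linarith
  have hterm : ∀ n : ℕ, |((n : ℝ) + 1) ^ (-α) * c n| ^ r
      = ((n : ℝ) + 1) ^ (-(α * r)) * |c n| ^ r := by
    intro n
    have hpos : (0:ℝ) < ((n : ℝ) + 1) ^ (-α) := Real.rpow_pos_of_pos (by positivity) _
    rw [abs_mul, abs_of_pos hpos, Real.mul_rpow (le_of_lt hpos) (abs_nonneg _),
      ← Real.rpow_mul (by positivity : (0:ℝ) ≤ (n : ℝ) + 1), neg_mul]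
  rw [funext hterm]
  rcases lt_or_ge r q with hlt | hge
  · -- Hölder case
    have hu : (1:ℝ) < q / r := (one_lt_div hr0).2 hlt
    have huv : (q / r).HolderConjugate (q / r / (q / r - 1)) :=
      Real.HolderConjugate.conjExponent hu
    set v := q / r / (q / r - 1) with hv
    have hsum1 : Summable fun n => (|c n| ^ r) ^ (q / r) := by
      convert hc using 2 with n
      rw [← Real.rpow_mul (abs_nonneg _)]
      congr 1
      field_simp
    have hγ : 1 < α * r * v := by
      have hv1 : v = q / (q - r) := by
        rw [hv]; field_simp
      have h := mul_lt_mul_of_pos_right hα2 (mul_pos hr0 hq0)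
      have e : (1 / r - 1 / q) * (r * q) = q - r := by field_simp
      rw [hv1, ← mul_div_assoc, lt_div_iff₀ (by linarith : (0:ℝ) < q - r), one_mul]
      nlinarith [h, e]
    have hsum2 : Summable fun n : ℕ => (((n : ℝ) + 1) ^ (-(α * r))) ^ v := by
      have : ∀ n : ℕ, (((n : ℝ) + 1) ^ (-(α * r))) ^ v = ((n : ℝ) + 1) ^ (-(α * r * v)) := by
        intro n
        rw [← Real.rpow_mul (by positivity)]
        ring_nf
      rw [funext this]
      exact psum hγ
    have hvu : v.HolderConjugate (q / r) := huv.symm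
    exact Real.summable_mul_of_Lp_Lq_of_nonneg (f := fun n : ℕ => ((n : ℝ) + 1) ^ (-(α * r)))
      (g := fun n => |c n| ^ r) hvu
      (fun n => le_of_lt (Real.rpow_pos_of_pos (by positivity) _))
      (fun n => Real.rpow_nonneg (abs_nonneg _) _) hsum2 hsum1
  · -- comparison case
    have htend : Filter.Tendsto (fun n => |c n| ^ q) Filter.atTop (nhds 0) :=
      hc.tendsto_atTop_zero
    have hev : ∀ᶠ n in Filter.atTop, |c n| ^ q ≤ 1 :=
      htend.eventually (by simpa using eventually_le_nhds (by norm_num : (0:ℝ) < 1))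
    obtain ⟨N, hN⟩ := Filter.eventually_atTop.1 hev
    rw [← summable_nat_add_iff N]
    have hcomp : ∀ n : ℕ, ((n + N : ℕ) : ℝ) ^ 0 = 1 := by simp
    refine Summable.of_nonneg_of_le (f := fun n : ℕ => |c (n + N)| ^ q)
      (fun n => mul_nonneg (le_of_lt (Real.rpow_pos_of_pos (by positivity) _))
        (Real.rpow_nonneg (abs_nonneg _) _)) (fun n => ?_) ((summable_nat_add_iff N).2 hc)
    have h1 : |c (n + N)| ≤ 1 := by
      have := hN (n + N) (Nat.le_add_left N n)
      by_contra hcon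
      push_neg at hcon
      have : (1:ℝ) < |c (n + N)| ^ q := Real.one_lt_rpow (by exact hcon) hq0
      linarith
    have h2 : |c (n + N)| ^ r ≤ |c (n + N)| ^ q := by
      rcases eq_or_lt_of_le (abs_nonneg (c (n + N))) with h0 | h0
      · rw [← h0, Real.zero_rpow (ne_of_gt hr0), Real.zero_rpow (ne_of_gt hq0)]
      · exact Real.rpow_le_rpow_of_exponent_ge h0 h1 hge
    have h3 : (((n + N : ℕ) : ℝ) + 1) ^ (-(α * r)) ≤ 1 :=
      Real.rpow_le_one_of_one_le_of_nonpos (by push_cast; linarith)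
        (by nlinarith)
    calc (((n + N : ℕ) : ℝ) + 1) ^ (-(α * r)) * |c (n + N)| ^ r
        ≤ 1 * |c (n + N)| ^ q := by
          exact mul_le_mul h3 h2 (Real.rpow_nonneg (abs_nonneg _) _) zero_le_one
      _ = |c (n + N)| ^ q := one_mul _

/-- For `1 < p < ∞` and `1 < r < ∞`, `ℓ_p` does not have the `r`-Dunford–Pettis
property. -/
theorem stmt_13 (p r : ℝ) (hp : 1 < p) (hr : 1 < r)
    [Fact (1 ≤ ENNReal.ofReal p)] :
    ∃ x : ℕ → lp (fun _ : ℕ => ℝ) (ENNReal.ofReal p),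
      ∃ f : ℕ → StrongDual ℝ (lp (fun _ : ℕ => ℝ) (ENNReal.ofReal p)),
        WeaklySummable r x ∧ WeaklySummable r f ∧
          ¬ Summable fun n => ∑' k, |f k (x n)| ^ r := by
  set s : ℝ≥0∞ := ENNReal.ofReal p with hs_def
  have hp0 : (0:ℝ) < p := by linarith
  have hsT : s.toReal = p := ENNReal.toReal_ofReal (le_of_lt hp0)
  have hsT0 : 0 < s.toReal := by rw [hsT]; exact hp0
  have hs0 : s ≠ 0 := by
    simp only [hs_def, ne_eq, ENNReal.ofReal_eq_zero, not_le]
    exact hp0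
  have hpq : p.HolderConjugate (p / (p - 1)) := Real.HolderConjugate.conjExponent hp
  set q : ℝ := p / (p - 1) with hq_def
  have hq1 : 1 < q := hpq.symm.lt
  -- the unit vectors
  set e : ℕ → lp (fun _ : ℕ => ℝ) s := fun n => lp.single s n (1:ℝ) with he_def
  -- coordinate functionals
  set coord : ℕ → StrongDual ℝ (lp (fun _ : ℕ => ℝ) s) := fun k =>
    LinearMap.mkContinuous
      { toFun := fun x => x k
        map_add' := fun x y => by simp [lp.coeFn_add]
        map_smul' := fun c x => by simp [lp.coeFn_smul] }
      1 (fun x => by rw [one_mul]; exact lp.norm_apply_le_norm hs0 x k) with hcoord_def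
  have hcoord_apply : ∀ k (x : lp (fun _ : ℕ => ℝ) s), coord k x = x k := fun k x => rfl
  -- norm bound for sums of unit vectors
  have hv_e : ∀ (u : ℕ → ℝ) (A : Finset ℕ),
      ‖∑ k ∈ A, u k • e k‖ ≤ (∑ k ∈ A, |u k| ^ p) ^ (1/p) := by
    intro u A
    have h0 : ∑ k ∈ A, u k • e k = ∑ k ∈ A, lp.single s k (u k) := by
      refine Finset.sum_congr rfl fun k _ => ?_
      rw [he_def]
      rw [← lp.single_smul]
      norm_num
    have h1 := lp.norm_sum_single hsT0 (fun k => u k) A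
    rw [hsT] at h1
    simp only [Real.norm_eq_abs] at h1
    rw [h0]
    rw [show ‖∑ k ∈ A, lp.single s k (u k)‖
        = (‖∑ k ∈ A, lp.single s k (u k)‖ ^ p) ^ (1/p) by
      rw [← Real.rpow_mul (norm_nonneg _), mul_one_div_cancel (ne_of_gt hp0), Real.rpow_one]]
    rw [h1]
  -- norm bound for sums of coordinate functionals
  have hv_coord : ∀ (u : ℕ → ℝ) (A : Finset ℕ),
      ‖∑ k ∈ A, u k • coord k‖ ≤ (∑ k ∈ A, |u k| ^ q) ^ (1/q) := by
    intro u A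
    have hrhs : 0 ≤ (∑ k ∈ A, |u k| ^ q) ^ (1/q) :=
      Real.rpow_nonneg (Finset.sum_nonneg fun k _ => Real.rpow_nonneg (abs_nonneg _) _) _
    refine ContinuousLinearMap.opNorm_le_bound _ hrhs fun x => ?_
    have happ : (∑ k ∈ A, u k • coord k) x = ∑ k ∈ A, u k * x k := by
      rw [ContinuousLinearMap.sum_apply]
      refine Finset.sum_congr rfl fun k _ => ?_
      rw [ContinuousLinearMap.smul_apply, hcoord_apply, smul_eq_mul]
    rw [happ, Real.norm_eq_abs]
    calc |∑ k ∈ A, u k * x k| ≤ ∑ k ∈ A, |u k * x k| := Finset.abs_sum_le_sum_abs _ _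
      _ = ∑ k ∈ A, |u k| * |x k| := by
          exact Finset.sum_congr rfl fun k _ => abs_mul _ _
      _ ≤ (∑ k ∈ A, |u k| ^ q) ^ (1/q) * (∑ k ∈ A, |x k| ^ p) ^ (1/p) := by
          exact Real.inner_le_Lp_mul_Lq_of_nonneg A hpq.symm
            (fun k _ => abs_nonneg _) (fun k _ => abs_nonneg _)
      _ ≤ (∑ k ∈ A, |u k| ^ q) ^ (1/q) * ‖x‖ := by
          refine mul_le_mul_of_nonneg_left ?_ hrhs
          have h2 := lp.sum_rpow_le_norm_rpow hsT0 x A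
          rw [hsT] at h2
          simp only [Real.norm_eq_abs] at h2
          have h3 := Real.rpow_le_rpow
            (Finset.sum_nonneg fun k _ => Real.rpow_nonneg (abs_nonneg _) _) h2
            (le_of_lt (one_div_pos.2 hp0))
          rwa [← Real.rpow_mul (norm_nonneg _), mul_one_div_cancel (ne_of_gt hp0),
            Real.rpow_one] at h3
  -- choose exponents
  set m₁ : ℝ := max (1/r - 1/q) 0 with hm₁_def
  set m₂ : ℝ := max (1/r - 1/p) 0 with hm₂_def
  set ε : ℝ := (1/r - m₁ - m₂)/2 with hε_def
  have h1p : 0 < 1/p := one_div_pos.2 hp0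
  have h1q : 0 < 1/q := one_div_pos.2 hpq.symm.pos
  have hinv : 1/p + 1/q = 1 := by
    rw [one_div, one_div]; exact hpq.inv_add_inv_eq_one
  have hr0 : (0:ℝ) < r := by linarith
  have h1r : 0 < 1/r := one_div_pos.2 hr0
  have h1r1 : 1/r < 1 := by rw [div_lt_one hr0]; exact hr
  have hε : 0 < ε := by
    rw [hε_def, hm₁_def, hm₂_def]
    rcases max_cases (1/r - 1/q) 0 with ⟨e1, e2⟩ | ⟨e1, e2⟩ <;>
      rcases max_cases (1/r - 1/p) 0 with ⟨f1, f2⟩ | ⟨f1, f2⟩ <;>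
      rw [e1, f1] <;> linarith
  set α : ℝ := m₁ + ε with hα_def
  set β : ℝ := m₂ + ε with hβ_def
  have hαβ : α + β = 1/r := by rw [hα_def, hβ_def, hε_def]; ring
  have hα0 : 0 < α := by
    have := le_max_right (1/r - 1/q) (0:ℝ)
    rw [hα_def]; rw [hm₁_def]; linarith
  have hβ0 : 0 < β := by
    have := le_max_right (1/r - 1/p) (0:ℝ)
    rw [hβ_def]; rw [hm₂_def]; linarith
  have hα2 : 1/r - 1/q < α := by
    have h : 1/r - 1/q ≤ m₁ := by rw [hm₁_def]; exact le_max_left _ _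
    rw [hα_def]; linarith
  have hβ2 : 1/r - 1/p < β := by
    have h : 1/r - 1/p ≤ m₂ := by rw [hm₂_def]; exact le_max_left _ _
    rw [hβ_def]; linarith
  -- the sequences
  refine ⟨fun n => ((n : ℝ) + 1) ^ (-α) • e n, fun k => ((k : ℝ) + 1) ^ (-β) • coord k,
    ?_, ?_, ?_⟩
  · -- weak summability of x
    intro g
    have hcf : Summable fun n => |g (e n)| ^ q := keyA hpq e hv_e g
    have heq : ∀ n : ℕ, |g (((n : ℝ) + 1) ^ (-α) • e n)| ^ r
        = |((n : ℝ) + 1) ^ (-α) * g (e n)| ^ r := by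
      intro n; rw [map_smul, smul_eq_mul]
    rw [funext heq]
    exact keyB hq1 hr hα0 hα2 hcf
  · -- weak summability of f
    intro G
    have hcf : Summable fun k => |G (coord k)| ^ p := keyA hpq.symm coord hv_coord G
    have heq : ∀ k : ℕ, |G (((k : ℝ) + 1) ^ (-β) • coord k)| ^ r
        = |((k : ℝ) + 1) ^ (-β) * G (coord k)| ^ r := by
      intro k; rw [map_smul, smul_eq_mul]
    rw [funext heq]
    exact keyB hp hr hβ0 hβ2 hcf
  · -- the double sum diverges
    intro hcon
    have he_apply : ∀ n k : ℕ, (e n : ∀ _ : ℕ, ℝ) k = if k = n then 1 else 0 := by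
      intro n k
      by_cases h : k = n
      · subst h; simp [he_def, lp.single_apply_self]
      · simp [he_def, lp.single_apply_ne _ _ _ h, h]
    have happ : ∀ k n : ℕ,
        (((k : ℝ) + 1) ^ (-β) • coord k) (((n : ℝ) + 1) ^ (-α) • e n)
        = ((k : ℝ) + 1) ^ (-β) * (((n : ℝ) + 1) ^ (-α) * (e n : ∀ _ : ℕ, ℝ) k) := by
      intro k n
      rw [ContinuousLinearMap.smul_apply, map_smul, smul_eq_mul, smul_eq_mul, hcoord_apply]
    have htsum : ∀ n : ℕ, (∑' k : ℕ, |(((k : ℝ) + 1) ^ (-β) • coord k)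
        (((n : ℝ) + 1) ^ (-α) • e n)| ^ r) = ((n : ℝ) + 1)⁻¹ := by
      intro n
      rw [tsum_eq_single n ?_]
      · rw [happ, he_apply, if_pos rfl, mul_one]
        have hpos : (0:ℝ) < (n : ℝ) + 1 := by positivity
        rw [← Real.rpow_add hpos]
        rw [abs_of_pos (Real.rpow_pos_of_pos hpos _)]
        rw [← Real.rpow_mul (le_of_lt hpos)]
        have h5 : (-β + -α) * r = -1 := by
          rw [show -β + -α = -(α + β) by ring, hαβ]
          field_simp
        rw [h5, Real.rpow_neg_one]
      · intro k hk
        rw [happ, he_apply, if_neg hk, mul_zero, mul_zero, abs_zero,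
          Real.zero_rpow (ne_of_gt hr0)]
    rw [funext htsum] at hcon
    have hshift : Summable fun n : ℕ => ((n : ℝ))⁻¹ := by
      refine (summable_nat_add_iff 1).1 ?_
      convert hcon using 2 with n
      all_goals push_cast
      all_goals rfl
    exact Real.not_summable_natCast_inv hshift
end
end

section
/- Let 1 < p < ∞ with conjugate exponent p', let 1 ≤ s < p', and let t be defined by 1/t = 1/s − 1/p'. If ⟨α_n⟩ ∈ ℓ_t, then the sequence ⟨α_n e_n⟩ is weakly s-summable in ℓ_p, where e_n denotes the n-th standard unit vector of ℓ_p. -/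
open NormedSpace ENNReal

noncomputable section

private lemma aux_dual_coeff (p p' : ℝ) (hp : 1 < p) (hpq : 1 / p + 1 / p' = 1)
    [Fact (1 ≤ ENNReal.ofReal p)]
    (f : StrongDual ℝ (lp (fun _ : ℕ => ℝ) (ENNReal.ofReal p))) :
    Summable fun n => |f (lp.single (ENNReal.ofReal p) n (1 : ℝ))| ^ p' := by
  have hp0 : 0 < p := lt_trans one_pos hp
  have hip : 0 < 1 / p := by positivity
  have hip1 : 1 / p < 1 := by rw [div_lt_one hp0]; exact hp
  have hip' : 0 < 1 / p' := by linarith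
  have hp'0 : 0 < p' := by
    by_contra h
    push_neg at h
    have : 1 / p' ≤ 0 := div_nonpos_of_nonneg_of_nonpos zero_le_one h
    linarith
  have hp'1 : 1 < p' := (div_lt_one hp'0).mp (by linarith)
  have hmul : (p' - 1) * p = p' := by
    have h1 : p ≠ 0 := hp0.ne'
    have h2 : p' ≠ 0 := hp'0.ne'
    field_simp at hpq
    nlinarith [hpq]
  set P := ENNReal.ofReal p with hP
  have hPt : P.toReal = p := ENNReal.toReal_ofReal hp0.le
  have hPt0 : 0 < P.toReal := by rw [hPt]; exact hp0
  set β : ℕ → ℝ := fun n => f (lp.single P n (1 : ℝ)) with hβ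
  have key : ∀ F : Finset ℕ, ∑ n ∈ F, |β n| ^ p' ≤ ‖f‖ ^ p' := by
    intro F
    set c : ℕ → ℝ := fun n => if β n = 0 then 0 else |β n| ^ p' / β n with hc
    set x : lp (fun _ : ℕ => ℝ) P := ∑ n ∈ F, lp.single P n (c n) with hx
    set S : ℝ := ∑ n ∈ F, |β n| ^ p' with hS
    have hS0 : 0 ≤ S := Finset.sum_nonneg fun n _ => Real.rpow_nonneg (abs_nonneg _) _
    have hfx : f x = S := by
      rw [hx, map_sum, hS]
      refine Finset.sum_congr rfl fun n _ => ?_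
      have h1 : lp.single (E := fun _ : ℕ => ℝ) P n (c n) = c n • lp.single (E := fun _ : ℕ => ℝ) P n (1 : ℝ) := by
        have := lp.single_smul (E := fun _ : ℕ => ℝ) (𝕜 := ℝ) P n (c n) (1 : ℝ)
        rw [smul_eq_mul, mul_one] at this
        exact this
      rw [h1, map_smul, smul_eq_mul]
      by_cases hb : β n = 0
      · simp [hc, hb, Real.zero_rpow hp'0.ne']
      · simp only [hc, if_neg hb, ← hβ]
        field_simp
        rfl
    have hxnorm : ‖x‖ ^ p = S := by
      have hns := lp.norm_sum_single (E := fun _ : ℕ => ℝ) hPt0 c F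
      rw [hPt] at hns
      rw [hx, hns, hS]
      refine Finset.sum_congr rfl fun n _ => ?_
      have habs : ‖c n‖ = |β n| ^ (p' - 1) := by
        by_cases hb : β n = 0
        · simp [hc, hb, Real.zero_rpow (by intro h; linarith : p' - 1 ≠ 0)]
        · have hbp : 0 < |β n| := abs_pos.mpr hb
          rw [Real.norm_eq_abs, hc]
          simp only [if_neg hb, abs_div, abs_abs, Real.abs_rpow_of_nonneg (abs_nonneg _),
            abs_abs]
          rw [Real.rpow_sub hbp, Real.rpow_one]
      rw [habs, ← Real.rpow_mul (abs_nonneg _), hmul]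
    have hle : S ≤ ‖f‖ * ‖x‖ := by
      calc S = f x := hfx.symm
        _ ≤ |f x| := le_abs_self _
        _ = ‖f x‖ := (Real.norm_eq_abs _).symm
        _ ≤ ‖f‖ * ‖x‖ := f.le_opNorm x
    rcases eq_or_lt_of_le hS0 with h0 | hSpos
    · rw [← h0]; exact Real.rpow_nonneg (norm_nonneg f) _
    · have hxval : ‖x‖ = S ^ (1 / p) := by
        rw [← hxnorm, ← Real.rpow_mul (norm_nonneg x), mul_one_div_cancel hp0.ne',
          Real.rpow_one]
      rw [hxval] at hle
      have h1 : S ^ (1 / p') * S ^ (1 / p) = S := by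
        rw [← Real.rpow_add hSpos, show 1 / p' + 1 / p = 1 by linarith, Real.rpow_one]
      have h3 : S ^ (1 / p') ≤ ‖f‖ := by
        have h2 : S ^ (1 / p') * S ^ (1 / p) ≤ ‖f‖ * S ^ (1 / p) := by rw [h1]; exact hle
        exact le_of_mul_le_mul_right h2 (Real.rpow_pos_of_pos hSpos _)
      calc S = (S ^ (1 / p')) ^ p' := by
              rw [← Real.rpow_mul hS0, one_div_mul_cancel hp'0.ne', Real.rpow_one]
        _ ≤ ‖f‖ ^ p' := Real.rpow_le_rpow (Real.rpow_nonneg hS0 _) h3 hp'0.le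
  exact summable_of_sum_le (fun n => Real.rpow_nonneg (abs_nonneg _) _) key

/-- If `1 ≤ s < p'`, `1/t = 1/s - 1/p'` and `⟨αₙ⟩ ∈ ℓ_t`, then `⟨αₙ eₙ⟩` is weakly
`s`-summable in `ℓ_p`. -/
theorem stmt_14 (p p' s t : ℝ) (hp : 1 < p) (hpq : 1 / p + 1 / p' = 1)
    (hs : 1 ≤ s) (hsp : s < p') (ht : 1 / t = 1 / s - 1 / p')
    [Fact (1 ≤ ENNReal.ofReal p)]
    (α : ℕ → ℝ) (hα : Summable fun n => |α n| ^ t) :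
    WeaklySummable s
      (fun n => α n • lp.single (ENNReal.ofReal p) n (1 : ℝ)) := by
  intro f
  have hs0 : 0 < s := lt_of_lt_of_le one_pos hs
  have hp'0 : 0 < p' := lt_of_le_of_lt hs0.le hsp
  have hit : 0 < 1 / t := by
    rw [ht]
    have : 1 / p' < 1 / s := one_div_lt_one_div_of_lt hs0 hsp
    linarith
  have ht0 : 0 < t := by
    by_contra h
    push_neg at h
    have : 1 / t ≤ 0 := div_nonpos_of_nonneg_of_nonpos zero_le_one h
    linarith
  set β : ℕ → ℝ := fun n => f (lp.single (ENNReal.ofReal p) n (1 : ℝ)) with hβ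
  have hβsum : Summable fun n => |β n| ^ p' := aux_dual_coeff p p' hp hpq f
  have heq : (fun n => |f (α n • lp.single (ENNReal.ofReal p) n (1 : ℝ))| ^ s)
      = fun n => (|α n| ^ s) * (|β n| ^ s) := by
    funext n
    rw [map_smul, smul_eq_mul, abs_mul, Real.mul_rpow (abs_nonneg _) (abs_nonneg _)]
  rw [heq]
  have hconj : (t / s).HolderConjugate (p' / s) := by
    rw [Real.holderConjugate_iff]
    constructor
    · rw [lt_div_iff₀ hs0, one_mul]
      refine lt_of_one_div_lt_one_div ht0 ?_
      rw [ht]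
      have : (0:ℝ) < 1 / p' := by positivity
      linarith
    · rw [inv_div, inv_div]
      have hst : s / t = s * (1 / t) := by ring
      rw [hst, ht]
      field_simp
      ring
  refine Real.summable_mul_of_Lp_Lq_of_nonneg hconj
    (fun n => Real.rpow_nonneg (abs_nonneg _) _)
    (fun n => Real.rpow_nonneg (abs_nonneg _) _) ?_ ?_
  · have : (fun n => (|α n| ^ s) ^ (t / s)) = fun n => |α n| ^ t := by
      funext n
      rw [← Real.rpow_mul (abs_nonneg _), mul_div_cancel₀ _ hs0.ne']
    rw [this]; exact hα
  · have : (fun n => (|β n| ^ s) ^ (p' / s)) = fun n => |β n| ^ p' := by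
      funext n
      rw [← Real.rpow_mul (abs_nonneg _), mul_div_cancel₀ _ hs0.ne']
    rw [this]; exact hβsum
end
end

section
/- Let 1 ≤ p < ∞ and let T : X → Y be a bounded linear operator between Banach spaces such that the image T(Ball(X)) of the closed unit ball of X is a p-limited subset of Y. Then T is sequentially p-limited: for every weakly p-summable sequence ⟨x_n⟩ in X, the sequence ⟨T x_n⟩ is operator p-summable in Y. -/
open NormedSpace ENNReal

noncomputable section

/-- A sequence `x` in `X` is operator `p`-summable if `⟨T xₙ⟩` is norm `p`-summable
for every bounded operator `T : X → ℓ_p`. -/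
def OperatorSummable (p : ℝ) [Fact (1 ≤ ENNReal.ofReal p)] {X : Type*}
    [NormedAddCommGroup X] [NormedSpace ℝ X] (x : ℕ → X) : Prop :=
  ∀ T : X →L[ℝ] lp (fun _ : ℕ => ℝ) (ENNReal.ofReal p),
    Summable fun n => ‖T (x n)‖ ^ p

/-- coordinate functional on `ℓ_q`. -/
def lpCoord (q : ℝ≥0∞) [Fact (1 ≤ q)] (m : ℕ) :
    lp (fun _ : ℕ => ℝ) q →L[ℝ] ℝ :=
  LinearMap.mkContinuous
    { toFun := fun f => f m
      map_add' := fun f g => by simp [lp.coeFn_add]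
      map_smul' := fun c f => by simp [lp.coeFn_smul] }
    1 (fun f => by
      have hq : q ≠ 0 := by
        have h1 : (1 : ℝ≥0∞) ≤ q := Fact.out
        intro h; rw [h] at h1; simp at h1
      show ‖f m‖ ≤ 1 * ‖f‖
      simpa using lp.norm_apply_le_norm hq f m)

@[simp] lemma lpCoord_apply (q : ℝ≥0∞) [Fact (1 ≤ q)] (m : ℕ)
    (f : lp (fun _ : ℕ => ℝ) q) : lpCoord q m f = f m := rfl

/-- A weakly `p`-summable sequence has finite weak-`ℓ_p` norm, by Banach–Steinhaus. -/
lemma weak_bound {X : Type*} [NormedAddCommGroup X] [NormedSpace ℝ X] [CompleteSpace X]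
    (p : ℝ) (hp : 1 ≤ p) [Fact (1 ≤ ENNReal.ofReal p)] (x : ℕ → X)
    (hx : ∀ f : StrongDual ℝ X, Summable fun n => |f (x n)| ^ p) :
    ∃ C : ℝ, 0 ≤ C ∧ ∀ f : StrongDual ℝ X, ∑' n, |f (x n)| ^ p ≤ C * ‖f‖ ^ p := by
  set q := ENNReal.ofReal p with hqdef
  have hp0 : 0 < p := lt_of_lt_of_le one_pos hp
  have hqt : q.toReal = p := ENNReal.toReal_ofReal hp0.le
  have hq0 : 0 < q.toReal := by rw [hqt]; exact hp0
  set g : Finset ℕ → (StrongDual ℝ X →L[ℝ] lp (fun _ : ℕ => ℝ) q) :=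
    fun s => ∑ n ∈ s, (inclusionInDoubleDual ℝ X (x n)).smulRight (lp.single q n 1) with hgdef
  have hg_apply : ∀ s f, g s f = ∑ n ∈ s, lp.single q n (f (x n)) := by
    intro s f
    rw [hgdef]
    simp only [ContinuousLinearMap.sum_apply, ContinuousLinearMap.smulRight_apply, dual_def]
    refine Finset.sum_congr rfl fun n _ => ?_
    rw [← lp.single_smul]; simp
  have hg_norm : ∀ s f, ‖g s f‖ ^ p = ∑ n ∈ s, |f (x n)| ^ p := by
    intro s f
    rw [hg_apply]
    have := lp.norm_sum_single (E := fun _ : ℕ => ℝ) hq0 (fun n => f (x n)) s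
    rw [hqt] at this
    simpa [Real.norm_eq_abs] using this
  have hbdd : ∀ f : StrongDual ℝ X, ∃ C, ∀ s, ‖g s f‖ ≤ C := by
    intro f
    refine ⟨(∑' n, |f (x n)| ^ p) ^ (1/p), fun s => ?_⟩
    have h1 : ‖g s f‖ ^ p ≤ ∑' n, |f (x n)| ^ p := by
      rw [hg_norm]
      exact Summable.sum_le_tsum s (fun n _ => Real.rpow_nonneg (abs_nonneg _) p) (hx f)
    have h2 := Real.rpow_le_rpow (Real.rpow_nonneg (norm_nonneg _) p) h1
      (by positivity : (0:ℝ) ≤ 1/p)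
    rwa [one_div, Real.rpow_rpow_inv (norm_nonneg _) hp0.ne', ← one_div] at h2
  obtain ⟨C', hC'⟩ := banach_steinhaus hbdd
  have hC'0 : 0 ≤ C' := le_trans (norm_nonneg (g ∅)) (hC' ∅)
  refine ⟨C' ^ p, Real.rpow_nonneg hC'0 p, fun f => ?_⟩
  refine Summable.tsum_le_of_sum_le (hx f) fun s => ?_
  rw [← hg_norm s f, ← Real.mul_rpow hC'0 (norm_nonneg _)]
  exact Real.rpow_le_rpow (norm_nonneg _) ((g s).le_opNorm f |>.trans
    (by exact mul_le_mul_of_nonneg_right (hC' s) (norm_nonneg f))) hp0.le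

/-- If `T : X → Y` maps the closed unit ball of `X` onto a `p`-limited set, then `T`
is sequentially `p`-limited: `⟨T xₙ⟩` is operator `p`-summable for every weakly
`p`-summable sequence `⟨xₙ⟩` in `X`. -/
theorem stmt_16 {X Y : Type*} [NormedAddCommGroup X] [NormedSpace ℝ X] [CompleteSpace X]
    [NormedAddCommGroup Y] [NormedSpace ℝ Y] [CompleteSpace Y]
    (p : ℝ) (hp : 1 ≤ p) [Fact (1 ≤ ENNReal.ofReal p)]
    (T : X →L[ℝ] Y) (hT : PLimited p (T '' Metric.closedBall 0 1)) :
    ∀ x : ℕ → X, WeaklySummable p x → OperatorSummable p (fun n => T (x n)) := by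
  intro x hx S
  set q := ENNReal.ofReal p with hqdef
  have hp0 : 0 < p := lt_of_lt_of_le one_pos hp
  have hqt : q.toReal = p := ENNReal.toReal_ofReal hp0.le
  have hq0 : 0 < q.toReal := by rw [hqt]; exact hp0
  -- coordinate functionals of S
  set φ : ℕ → StrongDual ℝ Y := fun m => (lpCoord q m).comp S with hφdef
  have hφsum : ∀ z : Y, Summable fun m => |φ m z| ^ p := by
    intro z
    have := (lp.hasSum_norm hq0 (S z)).summable
    rw [hqt] at this
    simpa [hφdef, Real.norm_eq_abs] using this
  obtain ⟨α, hα0, hαs, hαb⟩ := hT φ hφsum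
  -- the pulled-back functionals on X
  set ψ : ℕ → StrongDual ℝ X := fun m => (φ m).comp T with hψdef
  have hψnorm : ∀ m, ‖ψ m‖ ≤ α m := by
    intro m
    refine ContinuousLinearMap.opNorm_le_bound _ (hα0 m) fun u => ?_
    rcases eq_or_ne u 0 with rfl | hu
    · simp
    · have hnu : (0:ℝ) < ‖u‖ := norm_pos_iff.2 hu
      set v := ‖u‖⁻¹ • u with hv
      have hvball : v ∈ Metric.closedBall (0 : X) 1 := by
        rw [Metric.mem_closedBall, dist_zero_right, hv, norm_smul, norm_inv, norm_norm,
          inv_mul_cancel₀ hnu.ne']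
      have hb := hαb (T v) ⟨v, hvball, rfl⟩ m
      have hval : φ m (T v) = ‖u‖⁻¹ * ψ m u := by
        rw [hv]; simp [hψdef, smul_eq_mul]
      rw [hval, abs_mul, abs_inv, abs_norm] at hb
      calc ‖ψ m u‖ = ‖u‖ * (‖u‖⁻¹ * |ψ m u|) := by
            rw [Real.norm_eq_abs]; field_simp
        _ ≤ ‖u‖ * α m := by
            exact mul_le_mul_of_nonneg_left hb hnu.le
        _ = α m * ‖u‖ := mul_comm _ _
  obtain ⟨C, hC0, hCb⟩ := weak_bound p hp x hx
  -- termwise identity: ‖S (T (x n))‖ ^ p = ∑' m, |ψ m (x n)| ^ p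
  have hterm : ∀ n, ‖S (T (x n))‖ ^ p = ∑' m, |ψ m (x n)| ^ p := by
    intro n
    have := (lp.hasSum_norm hq0 (S (T (x n)))).tsum_eq
    rw [hqt] at this
    rw [← this]
    refine tsum_congr fun m => ?_
    simp [hψdef, hφdef, Real.norm_eq_abs]
  -- the bound for each m
  have hmb : ∀ m, ∑' n, |ψ m (x n)| ^ p ≤ C * α m ^ p := by
    intro m
    refine (hCb (ψ m)).trans ?_
    have : ‖ψ m‖ ^ p ≤ α m ^ p :=
      Real.rpow_le_rpow (norm_nonneg _) (hψnorm m) hp0.le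
    exact mul_le_mul_of_nonneg_left this hC0
  refine summable_of_sum_range_le (c := C * ∑' m, α m ^ p)
    (fun n => Real.rpow_nonneg (norm_nonneg _) p) fun N => ?_
  have hswap : ∑ n ∈ Finset.range N, ‖S (T (x n))‖ ^ p
      = ∑' m, ∑ n ∈ Finset.range N, |ψ m (x n)| ^ p := by
    rw [Finset.sum_congr rfl fun n _ => hterm n]
    exact (Summable.tsum_finsetSum fun n _ => hφsum (T (x n)) |>.congr (by
      intro m; simp [hψdef])).symm
  rw [hswap, ← tsum_mul_left]
  refine Summable.tsum_le_tsum (fun m => ?_) ?_ (hαs.mul_left C)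
  · refine le_trans ?_ (hmb m)
    exact Summable.sum_le_tsum _ (fun n _ => Real.rpow_nonneg (abs_nonneg _) p) (hx (ψ m))
  · -- summability of the partial-sum sequence
    refine Summable.of_nonneg_of_le (fun m => Finset.sum_nonneg fun n _ =>
      Real.rpow_nonneg (abs_nonneg _) p) (fun m => ?_) (hαs.mul_left C)
    refine le_trans ?_ (hmb m)
    exact Summable.sum_le_tsum _ (fun n _ => Real.rpow_nonneg (abs_nonneg _) p) (hx (ψ m))
end
end

section
/- Let ⟨α_n⟩ be a sequence of elements of ℓ_1 with C := ∑_n ‖α_n‖_{ℓ_1} < ∞, and let E_α : c₀ → ℓ_1 be the bounded linear operator E_α(β) = ∑_n β(n) α_n. Then E_α is absolutely 1-summing with constant C: for every finite family β_1, …, β_m in c₀, ∑_{i=1}^m ‖E_α(β_i)‖_{ℓ_1} ≤ C · sup{∑_{i=1}^m |g(β_i)| : g ∈ c₀*, ‖g‖ ≤ 1}; moreover C is the smallest constant with this property, i.e., π_1(E_α) = ∑_n ‖α_n‖_{ℓ_1}. -/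
open NormedSpace ENNReal

noncomputable section

open ZeroAtInfty Filter

/-- finitely supported functions as C₀ elements -/
def ofFinSupp (f : ℕ → ℝ) (m : ℕ) (hf : ∀ n, m ≤ n → f n = 0) : C₀(ℕ, ℝ) :=
  ⟨⟨f, continuous_of_discreteTopology⟩, by
    have : ∀ᶠ n in cocompact ℕ, f n = (0 : ℝ) := by
      refine mem_cocompact.mpr ⟨Set.Iio m, ?_, ?_⟩
      · exact (Set.finite_Iio m).isCompact
      · intro n hn
        exact hf n (not_lt.mp hn)
    exact Tendsto.congr' (this.mono fun n h => h.symm) tendsto_const_nhds⟩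

@[simp] lemma ofFinSupp_apply (f : ℕ → ℝ) (m : ℕ) (hf : ∀ n, m ≤ n → f n = 0) (n : ℕ) :
    ofFinSupp f m hf n = f n := rfl

lemma abs_apply_le (β : C₀(ℕ, ℝ)) (n : ℕ) : |β n| ≤ ‖β‖ := by
  have := BoundedContinuousFunction.norm_coe_le_norm β.toBCF n
  simpa using this

lemma norm_le_of (β : C₀(ℕ, ℝ)) (C : ℝ) (hC : 0 ≤ C) (h : ∀ n, |β n| ≤ C) : ‖β‖ ≤ C := by
  rw [← ZeroAtInftyContinuousMap.norm_toBCF_eq_norm]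
  exact BoundedContinuousFunction.norm_le hC |>.mpr (by simpa using h)

/-- evaluation functional -/
def evalCLM (n : ℕ) : C₀(ℕ, ℝ) →L[ℝ] ℝ :=
  LinearMap.mkContinuous
    { toFun := fun β => β n
      map_add' := fun a b => rfl
      map_smul' := fun c a => rfl } 1
    (fun β => by simpa using abs_apply_le β n)

lemma evalCLM_norm (n : ℕ) : ‖evalCLM n‖ ≤ 1 :=
  LinearMap.mkContinuous_norm_le _ zero_le_one _

@[simp] lemma evalCLM_apply (n : ℕ) (β : C₀(ℕ, ℝ)) : evalCLM n β = β n := rfl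

def single (i : ℕ) : C₀(ℕ, ℝ) :=
  ofFinSupp (Pi.single i 1) (i + 1) (fun n hn => Pi.single_eq_of_ne (by omega) 1)

@[simp] lemma single_apply (i n : ℕ) : single i n = if n = i then 1 else 0 := by
  simp [single, Pi.single_apply]

lemma apply_sum (m : ℕ) (s : Finset (Fin m)) (f : Fin m → C₀(ℕ, ℝ)) (n : ℕ) :
    (∑ i ∈ s, f i) n = ∑ i ∈ s, f i n := by
  have h := map_sum (evalCLM n) f s
  simp only [evalCLM_apply] at h
  exact h

lemma E_single (α : ℕ → lp (fun _ : ℕ => ℝ) 1)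
    (E : C₀(ℕ, ℝ) →L[ℝ] lp (fun _ : ℕ => ℝ) 1)
    (hE : ∀ β : C₀(ℕ, ℝ), HasSum (fun n => β n • α n) (E β)) (i : ℕ) :
    E (single i) = α i := by
  have h1 := hE (single i)
  have h2 : HasSum (fun n => single i n • α n) (α i) := by
    have := hasSum_ite_eq i (α i)
    refine this.congr_fun fun n => ?_
    by_cases h : n = i <;> simp [h]
  exact h1.unique h2

/-- If `⟨αₙ⟩` is a norm summable sequence in `ℓ_1` with sum of norms `C`, then the
operator `E_α : c₀ → ℓ_1`, `E_α β = ∑ₙ β(n) αₙ`, is absolutely `1`-summing with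
`π₁(E_α) = C`. -/
theorem stmt_17 (α : ℕ → lp (fun _ : ℕ => ℝ) 1)
    (hα : Summable fun n => ‖α n‖)
    (E : C₀(ℕ, ℝ) →L[ℝ] lp (fun _ : ℕ => ℝ) 1)
    (hE : ∀ β : C₀(ℕ, ℝ), HasSum (fun n => β n • α n) (E β)) :
    (∀ (m : ℕ) (β : Fin m → C₀(ℕ, ℝ)),
      ∑ i, ‖E (β i)‖ ≤ (∑' n, ‖α n‖) *
        sSup {t | ∃ g : StrongDual ℝ C₀(ℕ, ℝ), ‖g‖ ≤ 1 ∧ t = ∑ i, |g (β i)|}) ∧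
    ∀ c : ℝ, 0 ≤ c →
      (∀ (m : ℕ) (β : Fin m → C₀(ℕ, ℝ)),
        ∑ i, ‖E (β i)‖ ≤ c *
          sSup {t | ∃ g : StrongDual ℝ C₀(ℕ, ℝ), ‖g‖ ≤ 1 ∧ t = ∑ i, |g (β i)|}) →
      (∑' n, ‖α n‖) ≤ c := by
  have hsum : ∀ β' : C₀(ℕ, ℝ), Summable fun n => |β' n| * ‖α n‖ := by
    intro β'
    refine Summable.of_nonneg_of_le (fun n => by positivity)
      (fun n => mul_le_mul_of_nonneg_right (abs_apply_le β' n) (norm_nonneg _))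
      (hα.mul_left ‖β'‖)
  have key : ∀ β' : C₀(ℕ, ℝ), ‖E β'‖ ≤ ∑' n, |β' n| * ‖α n‖ := by
    intro β'
    rw [← (hE β').tsum_eq]
    have hs : Summable fun n => ‖β' n • α n‖ := by
      refine (hsum β').congr fun n => ?_
      rw [norm_smul, Real.norm_eq_abs]
    refine (norm_tsum_le_tsum_norm hs).trans_eq ?_
    exact tsum_congr fun n => by rw [norm_smul, Real.norm_eq_abs]
  constructor
  · intro m β
    set Sset := {t | ∃ g : StrongDual ℝ C₀(ℕ, ℝ), ‖g‖ ≤ 1 ∧ t = ∑ i, |g (β i)|} with hSset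
    have hbdd : BddAbove Sset := by
      refine ⟨∑ i, ‖β i‖, fun t ht => ?_⟩
      obtain ⟨g, hg, rfl⟩ := ht
      refine Finset.sum_le_sum fun i _ => ?_
      calc |g (β i)| = ‖g (β i)‖ := (Real.norm_eq_abs _).symm
        _ ≤ ‖g‖ * ‖β i‖ := g.le_opNorm _
        _ ≤ 1 * ‖β i‖ := mul_le_mul_of_nonneg_right hg (norm_nonneg _)
        _ = ‖β i‖ := one_mul _
    set S := sSup Sset with hS
    calc ∑ i, ‖E (β i)‖ ≤ ∑ i, ∑' n, |β i n| * ‖α n‖ :=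
          Finset.sum_le_sum fun i _ => key (β i)
      _ = ∑' n, ∑ i, |β i n| * ‖α n‖ := (Summable.tsum_finsetSum fun i _ => hsum (β i)).symm
      _ ≤ ∑' n, ‖α n‖ * S := by
          refine Summable.tsum_le_tsum (fun n => ?_)
            (summable_sum fun i _ => hsum (β i)) (hα.mul_right S)
          have hmem : (∑ i, |β i n|) ∈ Sset := ⟨evalCLM n, evalCLM_norm n, by simp⟩
          have hle : (∑ i, |β i n|) ≤ S := le_csSup hbdd hmem
          calc ∑ i, |β i n| * ‖α n‖ = (∑ i, |β i n|) * ‖α n‖ := (Finset.sum_mul _ _ _).symm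
            _ ≤ S * ‖α n‖ := mul_le_mul_of_nonneg_right hle (norm_nonneg _)
            _ = ‖α n‖ * S := mul_comm _ _
      _ = (∑' n, ‖α n‖) * S := tsum_mul_right
  · intro c hc h
    refine Summable.tsum_le_of_sum_le hα fun s => ?_
    set m := (s.sup id) + 1 with hm
    have hsub : s ⊆ Finset.range m := by
      intro i hi
      exact Finset.mem_range.mpr (by
        have h := Finset.le_sup (f := id) hi
        simp only [id_eq] at h
        omega)
    have h1 : ∑ i ∈ s, ‖α i‖ ≤ ∑ i ∈ Finset.range m, ‖α i‖ :=
      Finset.sum_le_sum_of_subset_of_nonneg hsub fun i _ _ => norm_nonneg _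
    refine h1.trans ?_
    rw [← Fin.sum_univ_eq_sum_range]
    have h2 := h m (fun i => single (i : ℕ))
    have h3 : ∑ i : Fin m, ‖E (single (i : ℕ))‖ = ∑ i : Fin m, ‖α (i : ℕ)‖ := by
      refine Finset.sum_congr rfl fun i _ => ?_
      rw [E_single α E hE]
    rw [h3] at h2
    refine h2.trans ?_
    have hSle : sSup {t | ∃ g : StrongDual ℝ C₀(ℕ, ℝ), ‖g‖ ≤ 1 ∧
        t = ∑ i : Fin m, |g (single (i : ℕ))|} ≤ 1 := by
      refine csSup_le ⟨0, (0 : StrongDual ℝ C₀(ℕ, ℝ)), by simp [ContinuousLinearMap.opNorm_zero], (Finset.sum_eq_zero fun i _ => by rw [ContinuousLinearMap.zero_apply, abs_zero]).symm⟩ fun t ht => ?_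
      obtain ⟨g, hg, rfl⟩ := ht
      set ε : Fin m → ℝ := fun i => if g (single (i : ℕ)) < 0 then -1 else 1 with hε
      have hεabs : ∀ i, |ε i| = 1 := by
        intro i
        by_cases hgi : g (single (i : ℕ)) < 0 <;> simp [hε, hgi]
      set γ : C₀(ℕ, ℝ) := ∑ i : Fin m, ε i • single (i : ℕ) with hγ
      have hγn : ∀ n, |γ n| ≤ 1 := by
        intro n
        have hγn' : γ n = ∑ i : Fin m, ε i * (if n = (i : ℕ) then 1 else 0) := by
          rw [hγ, apply_sum]
          refine Finset.sum_congr rfl fun i _ => ?_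
          rw [ZeroAtInftyContinuousMap.coe_smul]
          simp [single_apply]
        rw [hγn']
        by_cases hn : n < m
        · rw [Finset.sum_eq_single (⟨n, hn⟩ : Fin m)]
          · simp [hεabs ⟨n, hn⟩]
          · intro i _ hne
            have : ¬ (n = (i : ℕ)) := fun hni => hne (Fin.ext hni.symm)
            simp [this]
          · intro habs
            exact absurd (Finset.mem_univ _) habs
        · have : ∀ i : Fin m, ε i * (if n = (i : ℕ) then 1 else 0) = 0 := by
            intro i
            have : ¬ (n = (i : ℕ)) := by
              have := i.isLt
              omega
            simp [this]
          have hz : ∑ i : Fin m, ε i * (if n = (i : ℕ) then 1 else 0) = 0 :=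
            Finset.sum_eq_zero fun i _ => this i
          rw [hz]
          simp
      have hγnorm : ‖γ‖ ≤ 1 := norm_le_of γ 1 zero_le_one hγn
      have heq : ∑ i : Fin m, |g (single (i : ℕ))| = g γ := by
        rw [hγ, map_sum]
        refine Finset.sum_congr rfl fun i _ => ?_
        rw [map_smul, smul_eq_mul]
        by_cases hgi : g (single (i : ℕ)) < 0
        · rw [abs_of_neg hgi]; simp [hε, hgi]
        · rw [abs_of_nonneg (not_lt.mp hgi)]; simp [hε, hgi]
      rw [heq]
      calc g γ ≤ |g γ| := le_abs_self _
        _ = ‖g γ‖ := (Real.norm_eq_abs _).symm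
        _ ≤ ‖g‖ * ‖γ‖ := g.le_opNorm _
        _ ≤ 1 * 1 := mul_le_mul hg hγnorm (norm_nonneg _) zero_le_one
        _ = 1 := one_mul _
    calc c * sSup _ ≤ c * 1 := mul_le_mul_of_nonneg_left hSle hc
      _ = c := mul_one c
end
end

section
/- Let 1 < p < ∞ with conjugate exponent p' and let X be a Banach space. Then the following are equivalent: (1) every operator p-summable sequence in X is norm p-summable; (2) for every Banach space Y, every bounded linear operator T : Y → X whose adjoint T* : X* → Y* is absolutely p-summing is itself absolutely p-summing; (3) every bounded linear operator T : ℓ_{p'} → X whose adjoint T* : X* → (ℓ_{p'})* is absolutely p-summing is itself absolutely p-summing. -/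
open NormedSpace ENNReal

noncomputable section

namespace Stmt19

variable {p p' : ℝ}

universe u v w

lemma lp_single_add (q : ℝ≥0∞) (i : ℕ) (a b : ℝ) :
    lp.single (E := fun _ : ℕ => ℝ) q i (a + b) =
      lp.single (E := fun _ : ℕ => ℝ) q i a + lp.single (E := fun _ : ℕ => ℝ) q i b := by
  apply lp.ext
  funext j
  simp only [lp.coeFn_add, Pi.add_apply, lp.single_apply]
  by_cases h : j = i <;> simp [h]

/-- Single coordinate embedding `ℝ →L lp`. -/
def singleCLM (q : ℝ≥0∞) [Fact (1 ≤ q)] (hq : 0 < q.toReal) (i : ℕ) :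
    ℝ →L[ℝ] lp (fun _ : ℕ => ℝ) q :=
  LinearMap.mkContinuous
    { toFun := fun a => lp.single q i a
      map_add' := fun a b => lp_single_add q i a b
      map_smul' := fun c a => by
        simpa using (lp.single_smul (𝕜 := ℝ) (E := fun _ : ℕ => ℝ) q i c a) }
    1 (fun a => by
      have : ‖lp.single (E := fun _ : ℕ => ℝ) q i a‖ = ‖a‖ :=
        lp.norm_single (E := fun _ : ℕ => ℝ) (ENNReal.toReal_pos_iff.mp hq).1 i a
      simp [this])

@[simp] lemma singleCLM_apply (q : ℝ≥0∞) [Fact (1 ≤ q)] (hq : 0 < q.toReal) (i : ℕ) (a : ℝ) :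
    singleCLM q hq i a = lp.single q i a := rfl

/-- Coordinate functional on `lp`. -/
def coordCLM (q : ℝ≥0∞) [Fact (1 ≤ q)] (hq : q ≠ 0) (i : ℕ) :
    lp (fun _ : ℕ => ℝ) q →L[ℝ] ℝ :=
  LinearMap.mkContinuous
    { toFun := fun f => f i
      map_add' := fun f g => by simp [lp.coeFn_add]
      map_smul' := fun c f => by simp [lp.coeFn_smul] }
    1 (fun f => by show ‖f i‖ ≤ 1 * ‖f‖; simpa using lp.norm_apply_le_norm hq f i)

@[simp] lemma coordCLM_apply (q : ℝ≥0∞) [Fact (1 ≤ q)] (hq : q ≠ 0) (i : ℕ) (f : lp (fun _ : ℕ => ℝ) q) :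
    coordCLM q hq i f = f i := rfl


/-- Uniform bound on the weak `p`-sums, via Banach–Steinhaus. -/
lemma weakly_bound (hp : 1 < p) [Fact (1 ≤ ENNReal.ofReal p)]
    {Z : Type*} [NormedAddCommGroup Z] [NormedSpace ℝ Z]
    (z : ℕ → Z) (hz : WeaklySummable p z) :
    ∃ C : ℝ, 0 ≤ C ∧ ∀ f : StrongDual ℝ Z, (∑' n, |f (z n)| ^ p) ≤ C * ‖f‖ ^ p := by
  have hp0 : (0:ℝ) < p := lt_trans one_pos hp
  set q : ℝ≥0∞ := ENNReal.ofReal p with hqdef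
  have hqt : q.toReal = p := ENNReal.toReal_ofReal hp0.le
  have hq : 0 < q.toReal := by rw [hqt]; exact hp0
  -- the family of operators
  set g : Finset ℕ → (StrongDual ℝ Z →L[ℝ] lp (fun _ : ℕ => ℝ) q) := fun F =>
    ∑ n ∈ F, (singleCLM q hq n).comp (NormedSpace.inclusionInDoubleDual ℝ Z (z n)) with hgdef
  have hgapp : ∀ (F : Finset ℕ) (f : StrongDual ℝ Z),
      g F f = ∑ n ∈ F, lp.single q n (f (z n)) := by
    intro F f
    rw [hgdef]
    simp [ContinuousLinearMap.sum_apply, singleCLM_apply, NormedSpace.dual_def]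
  have hnorm : ∀ (F : Finset ℕ) (f : StrongDual ℝ Z),
      ‖g F f‖ ^ p = ∑ n ∈ F, |f (z n)| ^ p := by
    intro F f
    rw [hgapp]
    have := lp.norm_sum_single (E := fun _ : ℕ => ℝ) hq (fun n => f (z n)) F
    rw [hqt] at this
    simpa [Real.norm_eq_abs] using this
  have hptwise : ∀ f : StrongDual ℝ Z, ∃ C, ∀ F : Finset ℕ, ‖g F f‖ ≤ C := by
    intro f
    refine ⟨(∑' n, |f (z n)| ^ p) ^ (1/p), fun F => ?_⟩
    have h1 : ‖g F f‖ ^ p ≤ ∑' n, |f (z n)| ^ p := by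
      rw [hnorm]
      exact Summable.sum_le_tsum F (fun n _ => by positivity) (hz f)
    have h2 : ‖g F f‖ = (‖g F f‖ ^ p) ^ (1/p) := by
      rw [← Real.rpow_mul (norm_nonneg _), mul_one_div, div_self hp0.ne', Real.rpow_one]
    rw [h2]
    exact Real.rpow_le_rpow (by positivity) h1 (by positivity)
  obtain ⟨C', hC'⟩ := banach_steinhaus hptwise
  have hC'0 : 0 ≤ C' := le_trans (norm_nonneg _) (hC' ∅)
  refine ⟨C' ^ p, by positivity, fun f => ?_⟩
  refine Summable.tsum_le_of_sum_le (hz f) (fun F => ?_)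
  have h1 : ‖g F f‖ ≤ C' * ‖f‖ :=
    le_trans ((g F).le_opNorm f) (by
      exact mul_le_mul_of_nonneg_right (hC' F) (norm_nonneg _))
  calc ∑ n ∈ F, |f (z n)| ^ p = ‖g F f‖ ^ p := (hnorm F f).symm
    _ ≤ (C' * ‖f‖) ^ p := Real.rpow_le_rpow (norm_nonneg _) h1 hp0.le
    _ = C' ^ p * ‖f‖ ^ p := Real.mul_rpow hC'0 (norm_nonneg _)


/-- Key duality trick: if finite combinations of `e` are dominated by the `ℓ_{p'}` norm
of coefficients, then `⟨g (e k)⟩` is `p`-summable with `∑ |g eₖ|^p ≤ ‖g‖^p`. -/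
lemma dual_basis_summable (hc : Real.HolderConjugate p p')
    {W : Type*} [NormedAddCommGroup W] [NormedSpace ℝ W] (e : ℕ → W)
    (he : ∀ (F : Finset ℕ) (c : ℕ → ℝ),
      ‖∑ k ∈ F, c k • e k‖ ≤ (∑ k ∈ F, |c k| ^ p') ^ (1/p'))
    (g : StrongDual ℝ W) :
    Summable (fun k => |g (e k)| ^ p) ∧ ∑' k, |g (e k)| ^ p ≤ ‖g‖ ^ p := by
  have hp0 : (0:ℝ) < p := hc.pos
  have hp'0 : (0:ℝ) < p' := hc.symm.pos
  set b : ℕ → ℝ := fun k => g (e k) with hb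
  have key : ∀ F : Finset ℕ, ∑ k ∈ F, |b k| ^ p ≤ ‖g‖ ^ p := by
    intro F
    set c : ℕ → ℝ := fun k => |b k| ^ (p - 1) * Real.sign (b k) with hcdef
    set S : ℝ := ∑ k ∈ F, |b k| ^ p with hS
    have hS0 : 0 ≤ S := Finset.sum_nonneg (fun k _ => by positivity)
    have hcb : ∀ k, c k * b k = |b k| ^ p := by
      intro k
      by_cases h : b k = 0
      · simp [hcdef, h, Real.zero_rpow hp0.ne']
      · have : Real.sign (b k) * b k = |b k| := by
          rcases lt_or_gt_of_ne h with h' | h'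
          · rw [Real.sign_of_neg h', abs_of_neg h']; ring
          · rw [Real.sign_of_pos h', abs_of_pos h']; ring
        rw [hcdef, mul_assoc, this, ← Real.rpow_add_one (abs_ne_zero.mpr h)]
        norm_num
    have hcabs : ∀ k, |c k| ^ p' = |b k| ^ p := by
      intro k
      by_cases h : b k = 0
      · simp [hcdef, h, Real.zero_rpow (sub_pos.mpr hc.lt).ne',
          Real.zero_rpow hp'0.ne', Real.zero_rpow hp0.ne']
      · have h1 : |c k| = |b k| ^ (p - 1) := by
          rw [hcdef, abs_mul, abs_of_nonneg (by positivity : (0:ℝ) ≤ |b k| ^ (p-1))]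
          rcases lt_or_gt_of_ne h with h' | h'
          · rw [Real.sign_of_neg h']; simp
          · rw [Real.sign_of_pos h']; simp
        rw [h1, ← Real.rpow_mul (abs_nonneg _), hc.sub_one_mul_conj]
    have hgsum : g (∑ k ∈ F, c k • e k) = S := by
      rw [map_sum]
      simp only [map_smul, smul_eq_mul]
      rw [hS]
      exact Finset.sum_congr rfl (fun k _ => hcb k)
    have hbound : S ≤ ‖g‖ * S ^ (1/p') := by
      calc S = g (∑ k ∈ F, c k • e k) := hgsum.symm
        _ ≤ |g (∑ k ∈ F, c k • e k)| := le_abs_self _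
        _ ≤ ‖g‖ * ‖∑ k ∈ F, c k • e k‖ := g.le_opNorm _
        _ ≤ ‖g‖ * (∑ k ∈ F, |c k| ^ p') ^ (1/p') :=
            mul_le_mul_of_nonneg_left (he F c) (norm_nonneg _)
        _ = ‖g‖ * S ^ (1/p') := by
            rw [hS]
            congr 2
            exact Finset.sum_congr rfl (fun k _ => hcabs k)
    rcases eq_or_lt_of_le hS0 with h0 | hSpos
    · rw [← h0]; positivity
    · have hsplit : S = S ^ (1/p) * S ^ (1/p') := by
        rw [← Real.rpow_add hSpos, one_div, one_div, hc.inv_add_inv_eq_one, Real.rpow_one]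
      have h2 : S ^ (1/p) * S ^ (1/p') ≤ ‖g‖ * S ^ (1/p') := by
        rw [← hsplit]; exact hbound
      have h3 : S ^ (1/p) ≤ ‖g‖ :=
        le_of_mul_le_mul_right (by rwa [mul_comm (S ^ (1/p)), mul_comm ‖g‖] at h2)
          (Real.rpow_pos_of_pos hSpos _)
      calc S = (S ^ (1/p)) ^ p := by
            rw [← Real.rpow_mul hS0, one_div_mul_cancel hp0.ne', Real.rpow_one]
        _ ≤ ‖g‖ ^ p := Real.rpow_le_rpow (by positivity) h3 hp0.le
  have hsummable : Summable (fun k => |b k| ^ p) :=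
    summable_of_sum_le (fun k => by positivity) key
  exact ⟨hsummable, Summable.tsum_le_of_sum_le hsummable key⟩


/-- The coordinate vectors of `ℓ_{p'}` satisfy the ℓ_{p'}-domination property. -/
lemma he_single (hc : Real.HolderConjugate p p') [Fact (1 ≤ ENNReal.ofReal p')] :
    ∀ (F : Finset ℕ) (c : ℕ → ℝ),
      ‖∑ k ∈ F, c k • lp.single (E := fun _ : ℕ => ℝ) (ENNReal.ofReal p') k 1‖
        ≤ (∑ k ∈ F, |c k| ^ p') ^ (1/p') := by
  intro F c
  have hp'0 : (0:ℝ) < p' := hc.symm.pos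
  have hqt : (ENNReal.ofReal p').toReal = p' := ENNReal.toReal_ofReal hp'0.le
  have hq : 0 < (ENNReal.ofReal p').toReal := by rw [hqt]; exact hp'0
  have h1 : ∀ k : ℕ, c k • lp.single (E := fun _ : ℕ => ℝ) (ENNReal.ofReal p') k (1:ℝ)
      = lp.single (ENNReal.ofReal p') k (c k) := by
    intro k
    rw [← lp.single_smul]
    norm_num
  have h2 : ‖∑ k ∈ F, lp.single (E := fun _ : ℕ => ℝ) (ENNReal.ofReal p') k (c k)‖ ^ p'
      = ∑ k ∈ F, |c k| ^ p' := by
    have := lp.norm_sum_single (E := fun _ : ℕ => ℝ) hq c F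
    rw [hqt] at this
    simpa [Real.norm_eq_abs] using this
  simp only [h1]
  have hnn : (0:ℝ) ≤ ‖∑ k ∈ F, lp.single (E := fun _ : ℕ => ℝ) (ENNReal.ofReal p') k (c k)‖ :=
    norm_nonneg _
  rw [← h2, ← Real.rpow_mul hnn, mul_one_div, div_self hp'0.ne', Real.rpow_one]

/-- The coordinate functionals on `ℓ_p` satisfy the ℓ_{p'}-domination property. -/
lemma he_coord (hc : Real.HolderConjugate p p') [Fact (1 ≤ ENNReal.ofReal p)]
    (hq0 : (ENNReal.ofReal p) ≠ 0) :
    ∀ (F : Finset ℕ) (c : ℕ → ℝ),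
      ‖∑ k ∈ F, c k • (coordCLM (ENNReal.ofReal p) hq0 k)‖
        ≤ (∑ k ∈ F, |c k| ^ p') ^ (1/p') := by
  intro F c
  have hp0 : (0:ℝ) < p := hc.pos
  have hqt : (ENNReal.ofReal p).toReal = p := ENNReal.toReal_ofReal hp0.le
  have hq : 0 < (ENNReal.ofReal p).toReal := by rw [hqt]; exact hp0
  refine ContinuousLinearMap.opNorm_le_bound _ (by positivity) (fun x => ?_)
  have happ : (∑ k ∈ F, c k • (coordCLM (ENNReal.ofReal p) hq0 k)) x
      = ∑ k ∈ F, c k * x k := by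
    simp [ContinuousLinearMap.sum_apply]
  rw [happ, Real.norm_eq_abs]
  calc |∑ k ∈ F, c k * x k| ≤ ∑ k ∈ F, |c k * x k| := Finset.abs_sum_le_sum_abs _ _
    _ = ∑ k ∈ F, |c k| * |x k| := by simp [abs_mul]
    _ ≤ (∑ k ∈ F, |c k| ^ p') ^ (1/p') * (∑ k ∈ F, |x k| ^ p) ^ (1/p) := by
        simpa [abs_abs] using
          Real.inner_le_Lp_mul_Lq F (fun k => |c k|) (fun k => |x k|) hc.symm
    _ ≤ (∑ k ∈ F, |c k| ^ p') ^ (1/p') * ‖x‖ := by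
        refine mul_le_mul_of_nonneg_left ?_ (by positivity)
        have hsum : (∑ k ∈ F, |x k| ^ p) ≤ ‖x‖ ^ p := by
          have := lp.sum_rpow_le_norm_rpow hq x F
          rw [hqt] at this
          simpa [Real.norm_eq_abs] using this
        calc (∑ k ∈ F, |x k| ^ p) ^ (1/p) ≤ (‖x‖ ^ p) ^ (1/p) :=
              Real.rpow_le_rpow (by positivity) hsum (by positivity)
          _ = ‖x‖ := by
              rw [← Real.rpow_mul (norm_nonneg _), mul_one_div, div_self hp0.ne',
                Real.rpow_one]


lemma dualMap_apply' {X Y : Type*} [NormedAddCommGroup X] [NormedSpace ℝ X]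
    [NormedAddCommGroup Y] [NormedSpace ℝ Y] (T : X →L[ℝ] Y) (g : StrongDual ℝ Y) (v : X) :
    dualMap T g v = g (T v) := by
  simp only [dualMap, ContinuousLinearMap.flip_apply, ContinuousLinearMap.compL_apply,
    ContinuousLinearMap.comp_apply]


/-- (1) implies (2), for `Y` in an arbitrary universe. -/
lemma one_to_two (hc : Real.HolderConjugate p p') [Fact (1 ≤ ENNReal.ofReal p)]
    {X : Type u} [NormedAddCommGroup X] [NormedSpace ℝ X]
    (H1 : ∀ x : ℕ → X, OperatorSummable p x → Summable fun n => ‖x n‖ ^ p)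
    {Y : Type w} [NormedAddCommGroup Y] [NormedSpace ℝ Y]
    (T : Y →L[ℝ] X) (hT : AbsolutelySumming p (dualMap T)) : AbsolutelySumming p T := by
  intro y hy
  refine H1 (fun n => T (y n)) ?_
  intro S
  have hp0 : (0:ℝ) < p := hc.pos
  set q : ℝ≥0∞ := ENNReal.ofReal p with hqdef
  have hqt : q.toReal = p := ENNReal.toReal_ofReal hp0.le
  have hq : 0 < q.toReal := by rw [hqt]; exact hp0
  have hq0 : q ≠ 0 := (ENNReal.ofReal_pos.mpr hp0).ne'
  -- the functionals fₖ = eₖ' ∘ S on X and gₖ = fₖ ∘ T on Y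
  set f : ℕ → StrongDual ℝ X := fun k => (coordCLM q hq0 k).comp S with hfdef
  set g : ℕ → StrongDual ℝ Y := fun k => dualMap T (f k) with hgdef
  have hgapp : ∀ (k : ℕ) (v : Y), g k v = (S (T v) : ∀ _ : ℕ, ℝ) k := by
    intro k v
    rw [hgdef]
    simp only [dualMap, ContinuousLinearMap.flip_apply, ContinuousLinearMap.compL_apply,
      ContinuousLinearMap.comp_apply, hfdef, coordCLM_apply]
  -- ⟨fₖ⟩ is weakly p-summable in X*
  have hwf : WeaklySummable p f := by
    intro Φ
    have hΨ := (dual_basis_summable hc (fun k => coordCLM q hq0 k) (he_coord hc hq0)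
      (Φ.comp (dualMap S))).1
    have : (fun k => |(Φ.comp (dualMap S)) (coordCLM q hq0 k)| ^ p)
        = fun k => |Φ (f k)| ^ p := by
      funext k; rfl
    rwa [this] at hΨ
  -- so ⟨gₖ⟩ = ⟨T* fₖ⟩ is norm p-summable
  have hgsum : Summable fun k => ‖g k‖ ^ p := hT f hwf
  -- uniform bound on the weak sums of y
  obtain ⟨C, hC0, hCb⟩ := weakly_bound hc.lt y hy
  -- double series summability
  set G : ℕ × ℕ → ℝ := fun kn => |g kn.1 (y kn.2)| ^ p with hGdef
  have hGnn : ∀ kn, 0 ≤ G kn := fun kn => by positivity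
  have hGsum : Summable G := by
    refine (summable_prod_of_nonneg hGnn).2 ⟨fun k => hy (g k), ?_⟩
    refine Summable.of_nonneg_of_le (fun k => tsum_nonneg (fun n => by positivity))
      (fun k => hCb (g k)) (hgsum.mul_left C)
  have hHsum : Summable fun nk : ℕ × ℕ => G (nk.2, nk.1) := by
    have := (Equiv.prodComm ℕ ℕ).summable_iff (f := G)
    exact this.2 hGsum
  have hfinal : Summable fun n => ∑' k, G (k, n) :=
    ((summable_prod_of_nonneg (fun nk => hGnn (nk.2, nk.1))).1 hHsum).2
  have hnorm : ∀ n, ‖S (T (y n))‖ ^ p = ∑' k, G (k, n) := by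
    intro n
    have := lp.norm_rpow_eq_tsum hq (S (T (y n)))
    rw [hqt] at this
    rw [this]
    exact tsum_congr fun k => by simp only [hGdef, Real.norm_eq_abs, hgapp]
  have : (fun n => ‖S (T (y n))‖ ^ p) = fun n => ∑' k, G (k, n) := funext hnorm
  rw [this]
  exact hfinal


/-- Hölder inequality between an `ℓ_{p'}` element and a `p`-summable scalar sequence. -/
lemma holder_tsum (hc : Real.HolderConjugate p p') [Fact (1 ≤ ENNReal.ofReal p')]
    (a : lp (fun _ : ℕ => ℝ) (ENNReal.ofReal p')) (c : ℕ → ℝ)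
    (hcs : Summable fun n => |c n| ^ p) :
    (Summable fun n => |a n| * |c n|) ∧
      ∑' n, |a n| * |c n| ≤ ‖a‖ * (∑' n, |c n| ^ p) ^ (1/p) := by
  have hp'0 : (0:ℝ) < p' := hc.symm.pos
  have hqt : (ENNReal.ofReal p').toReal = p' := ENNReal.toReal_ofReal hp'0.le
  have hq' : 0 < (ENNReal.ofReal p').toReal := by rw [hqt]; exact hp'0
  have ha' : Summable fun n => |a n| ^ p' := by
    have := (lp.memℓp a).summable hq'
    rw [hqt] at this
    simpa [Real.norm_eq_abs] using this
  have H := Real.summable_and_inner_le_Lp_mul_Lq_tsum_of_nonneg hc.symm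
    (fun n => abs_nonneg (a n)) (fun n => abs_nonneg (c n)) ha' hcs
  refine ⟨H.1, le_trans H.2 ?_⟩
  have hnorm : (∑' n, |a n| ^ p') ^ (1/p') = ‖a‖ := by
    have h1 : ‖a‖ ^ p' = ∑' n, |a n| ^ p' := by
      have := lp.norm_rpow_eq_tsum hq' a
      rw [hqt] at this
      simpa [Real.norm_eq_abs] using this
    rw [← h1, ← Real.rpow_mul (norm_nonneg _), mul_one_div, div_self hp'0.ne',
      Real.rpow_one]
  rw [hnorm]

/-- `∑ aₙ • xₙ` converges for `a ∈ ℓ_{p'}` and `x` weakly `p`-summable (with uniform bound). -/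
lemma summable_smul_lp (hc : Real.HolderConjugate p p') [Fact (1 ≤ ENNReal.ofReal p')]
    {X : Type u} [NormedAddCommGroup X] [NormedSpace ℝ X] [CompleteSpace X]
    (x : ℕ → X) (hw : WeaklySummable p x) {C : ℝ} (hC0 : 0 ≤ C)
    (hCb : ∀ f : StrongDual ℝ X, (∑' n, |f (x n)| ^ p) ≤ C * ‖f‖ ^ p)
    (a : lp (fun _ : ℕ => ℝ) (ENNReal.ofReal p')) :
    Summable fun n => a n • x n := by
  have hp0 : (0:ℝ) < p := hc.pos
  have hp'0 : (0:ℝ) < p' := hc.symm.pos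
  have hqt : (ENNReal.ofReal p').toReal = p' := ENNReal.toReal_ofReal hp'0.le
  have hq' : 0 < (ENNReal.ofReal p').toReal := by rw [hqt]; exact hp'0
  have ha' : Summable fun n => |a n| ^ p' := by
    have := (lp.memℓp a).summable hq'
    rw [hqt] at this
    simpa [Real.norm_eq_abs] using this
  rw [summable_iff_vanishing_norm]
  intro ε hε
  set D : ℝ := C ^ (1/p) + 1 with hD
  have hD0 : (0:ℝ) < D := by positivity
  have hεD : (0:ℝ) < ε / D := by positivity
  obtain ⟨s, hs⟩ := summable_iff_vanishing_norm.1 ha' ((ε / D) ^ p') (by positivity)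
  refine ⟨s, fun t ht => ?_⟩
  have hM0 : (0:ℝ) ≤ ε / D * C ^ (1/p) := by positivity
  have hbound : ‖∑ n ∈ t, a n • x n‖ ≤ ε / D * C ^ (1/p) := by
    refine NormedSpace.norm_le_dual_bound ℝ _ hM0 (fun f => ?_)
    have happ : f (∑ n ∈ t, a n • x n) = ∑ n ∈ t, a n * f (x n) := by
      rw [map_sum]; simp [smul_eq_mul]
    rw [happ, Real.norm_eq_abs]
    have h1 : |∑ n ∈ t, a n * f (x n)| ≤ ∑ n ∈ t, |a n| * |f (x n)| := by
      refine le_trans (Finset.abs_sum_le_sum_abs _ _) ?_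
      simp [abs_mul]
    have h2 : ∑ n ∈ t, |a n| * |f (x n)|
        ≤ (∑ n ∈ t, |a n| ^ p') ^ (1/p') * (∑ n ∈ t, |f (x n)| ^ p) ^ (1/p) := by
      simpa [abs_abs] using
        Real.inner_le_Lp_mul_Lq t (fun n => |a n|) (fun n => |f (x n)|) hc.symm
    have h3 : (∑ n ∈ t, |a n| ^ p') ^ (1/p') ≤ ε / D := by
      have hlt : ∑ n ∈ t, |a n| ^ p' ≤ (ε / D) ^ p' := by
        have := hs t ht
        rw [Real.norm_eq_abs] at this
        have hnn : (0:ℝ) ≤ ∑ n ∈ t, |a n| ^ p' :=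
          Finset.sum_nonneg fun n _ => by positivity
        linarith [le_abs_self (∑ n ∈ t, |a n| ^ p')]
      calc (∑ n ∈ t, |a n| ^ p') ^ (1/p') ≤ ((ε / D) ^ p') ^ (1/p') :=
            Real.rpow_le_rpow (Finset.sum_nonneg fun n _ => by positivity) hlt
              (by positivity)
        _ = ε / D := by
            rw [← Real.rpow_mul hεD.le, mul_one_div, div_self hp'0.ne', Real.rpow_one]
    have h4 : (∑ n ∈ t, |f (x n)| ^ p) ^ (1/p) ≤ C ^ (1/p) * ‖f‖ := by
      have hsum : ∑ n ∈ t, |f (x n)| ^ p ≤ C * ‖f‖ ^ p :=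
        le_trans (Summable.sum_le_tsum t (fun n _ => by positivity) (hw f)) (hCb f)
      calc (∑ n ∈ t, |f (x n)| ^ p) ^ (1/p) ≤ (C * ‖f‖ ^ p) ^ (1/p) :=
            Real.rpow_le_rpow (Finset.sum_nonneg fun n _ => by positivity) hsum
              (by positivity)
        _ = C ^ (1/p) * ‖f‖ := by
            rw [Real.mul_rpow hC0 (by positivity), ← Real.rpow_mul (norm_nonneg _),
              mul_one_div, div_self hp0.ne', Real.rpow_one]
    calc |∑ n ∈ t, a n * f (x n)| ≤ ∑ n ∈ t, |a n| * |f (x n)| := h1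
      _ ≤ (∑ n ∈ t, |a n| ^ p') ^ (1/p') * (∑ n ∈ t, |f (x n)| ^ p) ^ (1/p) := h2
      _ ≤ (ε / D) * (C ^ (1/p) * ‖f‖) := by
          refine mul_le_mul h3 h4 (by positivity) hεD.le
      _ = ε / D * C ^ (1/p) * ‖f‖ := by ring
  calc ‖∑ n ∈ t, a n • x n‖ ≤ ε / D * C ^ (1/p) := hbound
    _ < ε / D * D := by
        refine mul_lt_mul_of_pos_left ?_ hεD
        rw [hD]; linarith
    _ = ε := by field_simp

/-- The key Hölder estimate for the synthesis operator. -/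
lemma holder_apply (hc : Real.HolderConjugate p p') [Fact (1 ≤ ENNReal.ofReal p')]
    {X : Type u} [NormedAddCommGroup X] [NormedSpace ℝ X] [CompleteSpace X]
    (x : ℕ → X) (hw : WeaklySummable p x) (f : StrongDual ℝ X)
    (a : lp (fun _ : ℕ => ℝ) (ENNReal.ofReal p'))
    (hsub : Summable fun n => a n • x n) :
    |f (∑' n, a n • x n)| ≤ (∑' n, |f (x n)| ^ p) ^ (1/p) * ‖a‖ := by
  have hcs : Summable fun n => |f (x n)| ^ p := hw f
  have H := holder_tsum hc a (fun n => f (x n)) hcs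
  have happ : f (∑' n, a n • x n) = ∑' n, a n * f (x n) := by
    rw [ContinuousLinearMap.map_tsum f hsub]
    simp [smul_eq_mul]
  rw [happ]
  have h1 : |∑' n, a n * f (x n)| ≤ ∑' n, |a n| * |f (x n)| := by
    have := norm_tsum_le_tsum_norm (f := fun n => a n * f (x n)) (by
      simpa [Real.norm_eq_abs, abs_mul] using H.1)
    simpa [Real.norm_eq_abs, abs_mul] using this
  calc |∑' n, a n * f (x n)| ≤ ∑' n, |a n| * |f (x n)| := h1
    _ ≤ ‖a‖ * (∑' n, |f (x n)| ^ p) ^ (1/p) := H.2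
    _ = (∑' n, |f (x n)| ^ p) ^ (1/p) * ‖a‖ := mul_comm _ _


/-- The synthesis operator `E : ℓ_{p'} → X`, `a ↦ ∑ aₙ xₙ`. -/
lemma exists_summing_op (hc : Real.HolderConjugate p p')
    [Fact (1 ≤ ENNReal.ofReal p)] [Fact (1 ≤ ENNReal.ofReal p')]
    {X : Type u} [NormedAddCommGroup X] [NormedSpace ℝ X] [CompleteSpace X]
    (x : ℕ → X) (hw : WeaklySummable p x) :
    ∃ E : lp (fun _ : ℕ => ℝ) (ENNReal.ofReal p') →L[ℝ] X,
      ∀ a, E a = ∑' n, a n • x n := by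
  obtain ⟨C, hC0, hCb⟩ := weakly_bound hc.lt x hw
  have hsub : ∀ a : lp (fun _ : ℕ => ℝ) (ENNReal.ofReal p'),
      Summable fun n => a n • x n := summable_smul_lp hc x hw hC0 hCb
  have hp0 : (0:ℝ) < p := hc.pos
  refine ⟨LinearMap.mkContinuous
    { toFun := fun a => ∑' n, a n • x n
      map_add' := fun a b => by
        have h1 : ∀ n : ℕ, ((a + b : lp (fun _ : ℕ => ℝ) (ENNReal.ofReal p')) n) • x n
            = a n • x n + b n • x n := by
          intro n
          rw [lp.coeFn_add]
          simp [add_smul]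
        calc (∑' n, ((a + b : lp (fun _ : ℕ => ℝ) (ENNReal.ofReal p')) n) • x n)
            = ∑' n, (a n • x n + b n • x n) := by rw [tsum_congr h1]
          _ = (∑' n, a n • x n) + ∑' n, b n • x n := Summable.tsum_add (hsub a) (hsub b)
      map_smul' := fun c a => by
        have h1 : ∀ n : ℕ, ((c • a : lp (fun _ : ℕ => ℝ) (ENNReal.ofReal p')) n) • x n
            = c • (a n • x n) := by
          intro n
          rw [lp.coeFn_smul]
          simp [smul_smul]
        calc (∑' n, ((c • a : lp (fun _ : ℕ => ℝ) (ENNReal.ofReal p')) n) • x n)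
            = ∑' n, c • (a n • x n) := by rw [tsum_congr h1]
          _ = c • ∑' n, a n • x n := (((hsub a).hasSum.const_smul c).tsum_eq)
          _ = _ := rfl }
    (C ^ (1/p)) (fun a => by
      refine NormedSpace.norm_le_dual_bound ℝ _ (by positivity) (fun f => ?_)
      have h1 := holder_apply hc x hw f a (hsub a)
      have h2 : (∑' n, |f (x n)| ^ p) ^ (1/p) ≤ C ^ (1/p) * ‖f‖ := by
        calc (∑' n, |f (x n)| ^ p) ^ (1/p) ≤ (C * ‖f‖ ^ p) ^ (1/p) :=
              Real.rpow_le_rpow (tsum_nonneg fun n => by positivity) (hCb f)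
                (by positivity)
          _ = C ^ (1/p) * ‖f‖ := by
              rw [Real.mul_rpow hC0 (by positivity), ← Real.rpow_mul (norm_nonneg _),
                mul_one_div, div_self hp0.ne', Real.rpow_one]
      calc ‖f (∑' n, a n • x n)‖ = |f (∑' n, a n • x n)| := rfl
        _ ≤ (∑' n, |f (x n)| ^ p) ^ (1/p) * ‖a‖ := h1
        _ ≤ (C ^ (1/p) * ‖f‖) * ‖a‖ :=
            mul_le_mul_of_nonneg_right h2 (norm_nonneg _)
        _ = C ^ (1/p) * ‖a‖ * ‖f‖ := by ring), fun a => rfl⟩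


set_option maxHeartbeats 1000000 in
/-- (3) implies (1). -/
lemma three_to_one (hc : Real.HolderConjugate p p')
    [Fact (1 ≤ ENNReal.ofReal p)] [Fact (1 ≤ ENNReal.ofReal p')]
    {X : Type u} [NormedAddCommGroup X] [NormedSpace ℝ X] [CompleteSpace X]
    (H3 : ∀ T : lp (fun _ : ℕ => ℝ) (ENNReal.ofReal p') →L[ℝ] X,
        AbsolutelySumming p (dualMap T) → AbsolutelySumming p T)
    (x : ℕ → X) (hx : OperatorSummable p x) : Summable fun n => ‖x n‖ ^ p := by
  have hp0 : (0:ℝ) < p := hc.pos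
  have hp'0 : (0:ℝ) < p' := hc.symm.pos
  have hqt : (ENNReal.ofReal p).toReal = p := ENNReal.toReal_ofReal hp0.le
  have hq : 0 < (ENNReal.ofReal p).toReal := by rw [hqt]; exact hp0
  have hq't : (ENNReal.ofReal p').toReal = p' := ENNReal.toReal_ofReal hp'0.le
  have hq' : 0 < (ENNReal.ofReal p').toReal := by rw [hq't]; exact hp'0
  -- Step 1: x is weakly p-summable
  have hw : WeaklySummable p x := by
    intro f
    have h1 := hx ((singleCLM (ENNReal.ofReal p) hq 0).comp f)
    have h2 : (fun n => ‖((singleCLM (ENNReal.ofReal p) hq 0).comp f) (x n)‖ ^ p)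
        = fun n => |f (x n)| ^ p := by
      funext n
      have : ‖lp.single (E := fun _ : ℕ => ℝ) (ENNReal.ofReal p) 0 (f (x n))‖ = ‖f (x n)‖ :=
        lp.norm_single (E := fun _ : ℕ => ℝ) (ENNReal.toReal_pos_iff.mp hq).1 0 (f (x n))
      simp [ContinuousLinearMap.comp_apply, singleCLM_apply, this, Real.norm_eq_abs]
    rwa [h2] at h1
  -- Step 2: synthesis operator
  obtain ⟨E, hEapp⟩ := exists_summing_op hc x hw
  obtain ⟨C, hC0, hCb⟩ := weakly_bound hc.lt x hw
  have hsub : ∀ a : lp (fun _ : ℕ => ℝ) (ENNReal.ofReal p'), Summable fun n => a n • x n :=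
    summable_smul_lp hc x hw hC0 hCb
  -- Step 3: the adjoint of E is absolutely p-summing
  have hdual : AbsolutelySumming p (dualMap E) := by
    intro fs hfs
    -- per-k bound on the dual norms
    have hkey : ∀ k, ‖dualMap E (fs k)‖ ^ p ≤ ∑' n, |fs k (x n)| ^ p := by
      intro k
      have hbd : ‖dualMap E (fs k)‖ ≤ (∑' n, |fs k (x n)| ^ p) ^ (1/p) := by
        refine ContinuousLinearMap.opNorm_le_bound _
          (Real.rpow_nonneg (tsum_nonneg fun n => by positivity) _) (fun a => ?_)
        rw [dualMap_apply', hEapp a]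
        exact holder_apply hc x hw (fs k) a (hsub a)
      calc ‖dualMap E (fs k)‖ ^ p ≤ ((∑' n, |fs k (x n)| ^ p) ^ (1/p)) ^ p :=
            Real.rpow_le_rpow (norm_nonneg _) hbd hp0.le
        _ = ∑' n, |fs k (x n)| ^ p := by
            rw [← Real.rpow_mul (tsum_nonneg fun n => by positivity), one_div,
              inv_mul_cancel₀ hp0.ne', Real.rpow_one]
    -- build the operator S : X → ℓ_p from the weakly summable sequence fs
    obtain ⟨C₂, hC₂0, hC₂b⟩ := weakly_bound hc.lt fs hfs
    have hmem : ∀ z : X, Memℓp (fun k => fs k z) (ENNReal.ofReal p) := by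
      intro z
      refine memℓp_gen ?_
      rw [hqt]
      have := hfs (NormedSpace.inclusionInDoubleDual ℝ X z)
      simpa [Real.norm_eq_abs, NormedSpace.dual_def] using this
    set S : X →L[ℝ] lp (fun _ : ℕ => ℝ) (ENNReal.ofReal p) := LinearMap.mkContinuous
      { toFun := fun z => ⟨fun k => fs k z, hmem z⟩
        map_add' := fun z w => by
          apply lp.ext
          funext k
          simp [lp.coeFn_add]
          rfl
        map_smul' := fun c z => by
          apply lp.ext
          funext k
          simp [lp.coeFn_smul] }
      (C₂ ^ (1/p)) (fun z => by
        show ‖(⟨fun k => fs k z, hmem z⟩ : lp (fun _ : ℕ => ℝ) (ENNReal.ofReal p))‖ ≤ C₂ ^ (1/p) * ‖z‖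
        have h1 : ‖(⟨fun k => fs k z, hmem z⟩ : lp (fun _ : ℕ => ℝ) (ENNReal.ofReal p))‖ ^ p
            = ∑' k, |fs k z| ^ p := by
          have := lp.norm_rpow_eq_tsum hq (⟨fun k => fs k z, hmem z⟩ :
            lp (fun _ : ℕ => ℝ) (ENNReal.ofReal p))
          rw [hqt] at this
          simpa [Real.norm_eq_abs] using this
        have h2 : (∑' k, |fs k z| ^ p) ≤ C₂ * ‖z‖ ^ p := by
          have h3 := hC₂b (NormedSpace.inclusionInDoubleDual ℝ X z)
          have h4 : ‖NormedSpace.inclusionInDoubleDual ℝ X z‖ ≤ ‖z‖ := by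
            exact NormedSpace.double_dual_bound ℝ X z
          calc (∑' k, |fs k z| ^ p)
              = ∑' k, |(NormedSpace.inclusionInDoubleDual ℝ X z) (fs k)| ^ p := by
                simp [NormedSpace.dual_def]
            _ ≤ C₂ * ‖NormedSpace.inclusionInDoubleDual ℝ X z‖ ^ p := h3
            _ ≤ C₂ * ‖z‖ ^ p := by
                refine mul_le_mul_of_nonneg_left ?_ hC₂0
                exact Real.rpow_le_rpow (ContinuousLinearMap.opNorm_nonneg _) h4 hp0.le
        have h5 : ‖(⟨fun k => fs k z, hmem z⟩ : lp (fun _ : ℕ => ℝ) (ENNReal.ofReal p))‖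
            = (‖(⟨fun k => fs k z, hmem z⟩ : lp (fun _ : ℕ => ℝ) (ENNReal.ofReal p))‖ ^ p) ^ (1/p) := by
          rw [← Real.rpow_mul (norm_nonneg _), mul_one_div, div_self hp0.ne',
            Real.rpow_one]
        rw [h5, h1]
        calc (∑' k, |fs k z| ^ p) ^ (1/p) ≤ (C₂ * ‖z‖ ^ p) ^ (1/p) :=
              Real.rpow_le_rpow (tsum_nonneg fun k => by positivity) h2 (by positivity)
          _ = C₂ ^ (1/p) * ‖z‖ := by
              rw [Real.mul_rpow hC₂0 (by positivity), ← Real.rpow_mul (norm_nonneg _),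
                mul_one_div, div_self hp0.ne', Real.rpow_one])
    have hSapp : ∀ (z : X) (k : ℕ), (S z : ∀ _ : ℕ, ℝ) k = fs k z := fun z k => rfl
    -- operator summability gives the double sum
    have hSx := hx S
    have hSnorm : ∀ n, ‖S (x n)‖ ^ p = ∑' k, |fs k (x n)| ^ p := by
      intro n
      have := lp.norm_rpow_eq_tsum hq (S (x n))
      rw [hqt] at this
      rw [this]
      exact tsum_congr fun k => by rw [Real.norm_eq_abs, hSapp]
    -- double series manipulation
    set G : ℕ × ℕ → ℝ := fun nk => |fs nk.2 (x nk.1)| ^ p with hGdef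
    have hGnn : ∀ nk, 0 ≤ G nk := fun nk => by positivity
    have hGsum : Summable G := by
      refine (summable_prod_of_nonneg hGnn).2 ⟨fun n => ?_, ?_⟩
      · have := (hmem (x n)).summable hq
        rw [hqt] at this
        simpa [Real.norm_eq_abs] using this
      · have : (fun n => ∑' k, G (n, k)) = fun n => ‖S (x n)‖ ^ p := by
          funext n
          rw [hSnorm]
        rw [this]
        exact hSx
    have hHsum : Summable fun kn : ℕ × ℕ => G (kn.2, kn.1) :=
      ((Equiv.prodComm ℕ ℕ).summable_iff (f := G)).2 hGsum
    have hfinal : Summable fun k => ∑' n, G (n, k) :=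
      ((summable_prod_of_nonneg (fun kn => hGnn (kn.2, kn.1))).1 hHsum).2
    refine Summable.of_nonneg_of_le (fun k => by positivity) (fun k => ?_) hfinal
    exact hkey k
  -- Step 4: apply H3 and evaluate at the coordinate basis
  have hE := H3 E hdual
  have he : WeaklySummable p (fun n => lp.single (E := fun _ : ℕ => ℝ) (ENNReal.ofReal p') n 1) := by
    intro g
    exact (dual_basis_summable hc _ (he_single hc) g).1
  have h6 := hE _ he
  have h7 : (fun n => ‖E (lp.single (E := fun _ : ℕ => ℝ) (ENNReal.ofReal p') n 1)‖ ^ p)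
      = fun n => ‖x n‖ ^ p := by
    funext n
    rw [hEapp]
    have h8 : (∑' m, (lp.single (E := fun _ : ℕ => ℝ) (ENNReal.ofReal p') n 1 : lp (fun _ : ℕ => ℝ) (ENNReal.ofReal p')) m • x m)
        = x n := by
      rw [tsum_eq_single n]
      · rw [lp.single_apply_self]
        exact one_smul _ _
      · intro m hm
        rw [lp.single_apply_ne (ENNReal.ofReal p') n _ hm]
        exact zero_smul _ _
    rw [h8]
  rwa [h7] at h6


/-- (2) implies (3), by transporting `ℓ_{p'}` along `ULift` to universe `v`. -/
lemma two_to_three (hc : Real.HolderConjugate p p')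
    [Fact (1 ≤ ENNReal.ofReal p)] [Fact (1 ≤ ENNReal.ofReal p')]
    {X : Type u} [NormedAddCommGroup X] [NormedSpace ℝ X] [CompleteSpace X]
    (H2 : ∀ (Y : Type v) [NormedAddCommGroup Y] [NormedSpace ℝ Y] [CompleteSpace Y],
        ∀ T : Y →L[ℝ] X, AbsolutelySumming p (dualMap T) → AbsolutelySumming p T) :
    ∀ T : lp (fun _ : ℕ => ℝ) (ENNReal.ofReal p') →L[ℝ] X,
        AbsolutelySumming p (dualMap T) → AbsolutelySumming p T := by
  intro T hT
  have hp0 : (0:ℝ) < p := hc.pos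
  set L := lp (fun _ : ℕ => ℝ) (ENNReal.ofReal p') with hL
  let E : ULift.{v} L ≃L[ℝ] L :=
    (LinearIsometryEquiv.ulift ℝ L).toContinuousLinearEquiv
  let d : ULift.{v} L →L[ℝ] L := E.toContinuousLinearMap
  let T' : ULift.{v} L →L[ℝ] X := T.comp d
  have hnormd : ∀ v : ULift.{v} L, ‖d v‖ = ‖v‖ := fun v =>
    (LinearIsometryEquiv.ulift ℝ L).norm_map v
  have hdual' : AbsolutelySumming p (dualMap T') := by
    intro fs hfs
    have h1 := hT fs hfs
    refine Summable.of_nonneg_of_le (fun n => by positivity) (fun n => ?_) h1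
    have h2 : ‖dualMap T' (fs n)‖ ≤ ‖dualMap T (fs n)‖ := by
      refine ContinuousLinearMap.opNorm_le_bound _ (norm_nonneg _) (fun v => ?_)
      rw [dualMap_apply']
      have h3 : (fs n) (T' v) = (dualMap T (fs n)) (d v) := by
        rw [dualMap_apply']; rfl
      rw [h3, ← hnormd v]
      exact (dualMap T (fs n)).le_opNorm (d v)
    exact Real.rpow_le_rpow (norm_nonneg _) h2 hp0.le
  have h2 := H2 (ULift.{v} L) T' hdual'
  intro xs hxs
  have hweak : WeaklySummable p (fun n => E.symm (xs n)) := by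
    intro f
    have := hxs (f.comp E.symm.toContinuousLinearMap)
    simpa using this
  have h3 := h2 (fun n => E.symm (xs n)) hweak
  have h4 : (fun n => ‖T' (E.symm (xs n))‖ ^ p) = fun n => ‖T (xs n)‖ ^ p := by
    funext n
    have : T' (E.symm (xs n)) = T (xs n) := by
      show T (d (E.symm (xs n))) = T (xs n)
      congr 1
    rw [this]
  rwa [h4] at h3


end Stmt19

universe u v

/-- The following are equivalent for a Banach space `X`: (1) every operator
`p`-summable sequence in `X` is norm `p`-summable; (2) every operator `T : Y → X`
(for any Banach space `Y`) with absolutely `p`-summing adjoint is absolutely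
`p`-summing; (3) every operator `T : ℓ_{p'} → X` with absolutely `p`-summing adjoint
is absolutely `p`-summing. -/
theorem stmt_19 {X : Type u} [NormedAddCommGroup X] [NormedSpace ℝ X] [CompleteSpace X]
    (p p' : ℝ) (hp : 1 < p) (hpq : 1 / p + 1 / p' = 1)
    [Fact (1 ≤ ENNReal.ofReal p)] [Fact (1 ≤ ENNReal.ofReal p')] :
    ((∀ x : ℕ → X, OperatorSummable p x → Summable fun n => ‖x n‖ ^ p) ↔
      (∀ (Y : Type v) [NormedAddCommGroup Y] [NormedSpace ℝ Y] [CompleteSpace Y],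
        ∀ T : Y →L[ℝ] X, AbsolutelySumming p (dualMap T) → AbsolutelySumming p T)) ∧
    ((∀ x : ℕ → X, OperatorSummable p x → Summable fun n => ‖x n‖ ^ p) ↔
      (∀ T : lp (fun _ : ℕ => ℝ) (ENNReal.ofReal p') →L[ℝ] X,
        AbsolutelySumming p (dualMap T) → AbsolutelySumming p T)) := by
  have hc : Real.HolderConjugate p p' := by
    refine Real.holderConjugate_iff.mpr ⟨hp, ?_⟩
    rw [one_div, one_div] at hpq
    exact hpq
  constructor
  · constructor
    · intro H1 Y _ _ _ T hT
      exact Stmt19.one_to_two hc H1 T hT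
    · intro H2 x hx
      exact Stmt19.three_to_one hc (Stmt19.two_to_three hc H2) x hx
  · constructor
    · intro H1 T hT
      exact Stmt19.one_to_two hc H1 T hT
    · intro H3 x hx
      exact Stmt19.three_to_one hc H3 x hx
end
end
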